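/- arXiv:1905.02418 — 13 statements merged into one kernel-verified Lean document; each statement's English description precedes it below -/
import Mathlib

section
/- For every integer d ≥ 4, the number of quadruples (α,β,c,e) ∈ ℕ⁴ with α+β+c+e = d and d dividing β+2c+3e is strictly less than (d+1)(d+2)/2; equivalently, the cardinality μ(T_d) of W_d satisfies μ(T_d) < binom(d+2, 2). -/
/-- `W_d`: triples `(r,γ,δ)` encoding the degree-`d` monomials invariant under the
action of the diagonal matrix `M(1,e,e²,e³)`. -/
def Wset (d : ℕ) : Set (ℤ × ℤ × ℤ) :=
  {x | 0 ≤ x.1 ∧ x.1 ≤ 3 ∧ 0 ≤ x.2.1 ∧ 0 ≤ x.2.2 ∧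
    0 ≤ x.2.2 + 2 * x.2.1 + (1 - x.1) * (d : ℤ) ∧ 2 * x.2.2 + 3 * x.2.1 ≤ x.1 * (d : ℤ)}

/-- Encoding of invariant quadruples `(α,β,c,e)` into pairs of naturals. -/
def fenc (d : ℕ) (q : ℕ × ℕ × ℕ × ℕ) : ℕ × ℕ :=
  if q.2.1 + 2 * q.2.2.1 + 3 * q.2.2.2 = 0 then (0, d)
  else if q.2.1 + 2 * q.2.2.1 + 3 * q.2.2.2 = d then (q.2.2.1, q.2.2.2)
  else if q.2.1 + 2 * q.2.2.1 + 3 * q.2.2.2 = 2 * d then (d - q.1 - q.2.1, q.2.1)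
  else (1, d - 1)

/-- Decoding of a triple in `W_d` into the corresponding exponent quadruple. -/
def genc (d : ℕ) (x : ℤ × ℤ × ℤ) : ℕ × ℕ × ℕ × ℕ :=
  ((x.2.2 + 2 * x.2.1 + (1 - x.1) * (d : ℤ)).toNat,
   (x.1 * (d : ℤ) - 2 * x.2.2 - 3 * x.2.1).toNat,
   x.2.2.toNat, x.2.1.toNat)

/-- The triangle `{(a,b) : a+b ≤ d}` as a finset. -/
def Tfin (d : ℕ) : Finset (ℕ × ℕ) :=
  (Finset.range (d + 1) ×ˢ Finset.range (d + 1)).filter (fun p => p.1 + p.2 ≤ d)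

lemma Tfin_card (d : ℕ) : (Tfin d).card = (d + 1) * (d + 2) / 2 := by
  have h1 : Tfin d = (Finset.range (d + 1)).biUnion
      (fun a => {a} ×ˢ Finset.range (d + 1 - a)) := by
    ext ⟨a, b⟩
    simp [Tfin, Finset.mem_filter, Finset.mem_product, Finset.mem_range]
    omega
  rw [h1, Finset.card_biUnion]
  · have h2 : ∀ a ∈ Finset.range (d + 1), ({a} ×ˢ Finset.range (d + 1 - a)).card = d + 1 - a := by
      intro a _; simp
    rw [Finset.sum_congr rfl h2]
    have h3 : ∑ a ∈ Finset.range (d + 1), (d + 1 - a) = ∑ j ∈ Finset.range (d + 1), (j + 1) := by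
      rw [← Finset.sum_range_reflect]
      apply Finset.sum_congr rfl
      intro j hj
      simp only [Finset.mem_range] at hj
      omega
    rw [h3, Finset.sum_add_distrib]
    have h4 := Finset.sum_range_id_mul_two (d + 1)
    simp only [Finset.sum_const, Finset.card_range, smul_eq_mul, mul_one]
    set s := ∑ i ∈ Finset.range (d + 1), i with hs
    have h5 : (d + 1) * (d + 2) = s * 2 + (d + 1) * 2 := by
      rw [h4]
      have hdd : d + 1 - 1 = d := rfl
      rw [hdd]; ring
    omega
  · intro a _ b _ hab
    simp [Finset.disjoint_left, Prod.ext_iff]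
    intro x y hx _ h
    omega

lemma kcases (d : ℕ) (hd : 4 ≤ d) (q : ℕ × ℕ × ℕ × ℕ)
    (hsum : q.1 + q.2.1 + q.2.2.1 + q.2.2.2 = d)
    (hdvd : d ∣ q.2.1 + 2 * q.2.2.1 + 3 * q.2.2.2) :
    q.2.1 + 2 * q.2.2.1 + 3 * q.2.2.2 = 0 ∨
    q.2.1 + 2 * q.2.2.1 + 3 * q.2.2.2 = d ∨
    q.2.1 + 2 * q.2.2.1 + 3 * q.2.2.2 = 2 * d ∨
    q.2.1 + 2 * q.2.2.1 + 3 * q.2.2.2 = 3 * d := by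
  obtain ⟨r, hr⟩ := hdvd
  have hr3 : r ≤ 3 := by
    by_contra h
    have : 4 * d ≤ d * r := by
      calc 4 * d = d * 4 := by ring
      _ ≤ d * r := Nat.mul_le_mul_left d (by omega)
    omega
  interval_cases r <;> omega

lemma fenc_mem (d : ℕ) (hd : 4 ≤ d) (q : ℕ × ℕ × ℕ × ℕ)
    (hsum : q.1 + q.2.1 + q.2.2.1 + q.2.2.2 = d)
    (hdvd : d ∣ q.2.1 + 2 * q.2.2.1 + 3 * q.2.2.2) :
    (fenc d q).1 + (fenc d q).2 ≤ d ∧ fenc d q ≠ (0, d - 1) := by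
  have hk := kcases d hd q hsum hdvd
  unfold fenc
  split_ifs <;> simp [Prod.ext_iff] <;> omega

lemma fenc_inj (d : ℕ) (hd : 4 ≤ d) (q q' : ℕ × ℕ × ℕ × ℕ)
    (hsum : q.1 + q.2.1 + q.2.2.1 + q.2.2.2 = d)
    (hdvd : d ∣ q.2.1 + 2 * q.2.2.1 + 3 * q.2.2.2)
    (hsum' : q'.1 + q'.2.1 + q'.2.2.1 + q'.2.2.2 = d)
    (hdvd' : d ∣ q'.2.1 + 2 * q'.2.2.1 + 3 * q'.2.2.2)
    (h : fenc d q = fenc d q') : q = q' := by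
  have hk := kcases d hd q hsum hdvd
  have hk' := kcases d hd q' hsum' hdvd'
  unfold fenc at h
  rw [Prod.ext_iff, Prod.ext_iff, Prod.ext_iff] at *
  split_ifs at h <;> simp [Prod.ext_iff] at h ⊢ <;> omega

lemma genc_mem (d : ℕ) (x : ℤ × ℤ × ℤ) (hx : x ∈ Wset d) :
    (genc d x).1 + (genc d x).2.1 + (genc d x).2.2.1 + (genc d x).2.2.2 = d ∧
    d ∣ (genc d x).2.1 + 2 * (genc d x).2.2.1 + 3 * (genc d x).2.2.2 := by
  obtain ⟨h1, h2, h3, h4, h5, h6⟩ := hx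
  obtain ⟨r, γ, δ⟩ := x
  simp only at h1 h2 h3 h4 h5 h6
  constructor
  · simp only [genc]
    interval_cases r <;> push_cast at h5 h6 ⊢ <;> omega
  · simp only [genc]
    interval_cases r
    · exact ⟨0, by push_cast at h5 h6 ⊢; omega⟩
    · exact ⟨1, by push_cast at h5 h6 ⊢; omega⟩
    · exact ⟨2, by push_cast at h5 h6 ⊢; omega⟩
    · exact ⟨3, by push_cast at h5 h6 ⊢; omega⟩

set_option maxHeartbeats 1000000 in
lemma genc_inj (d : ℕ) (hd : 4 ≤ d) : Set.InjOn (genc d) (Wset d) := by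
  rintro ⟨r, γ, δ⟩ ⟨h1, h2, h3, h4, h5, h6⟩ ⟨r', γ', δ'⟩ ⟨h1', h2', h3', h4', h5', h6'⟩ h
  simp only [genc, Prod.ext_iff] at h ⊢
  simp only at h1 h2 h3 h4 h5 h6 h1' h2' h3' h4' h5' h6'
  obtain ⟨ha, hb, hc, he⟩ := h
  interval_cases r <;> interval_cases r' <;> omega

/-- For `d ≥ 4` the number of quadruples `(α,β,c,e) ∈ ℕ⁴` with `α+β+c+e = d` and
`d ∣ β+2c+3e` is strictly less than `(d+1)(d+2)/2`; equivalently
`μ(T_d) = #W_d < binom(d+2,2)`. -/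
theorem stmt2 (d : ℕ) (hd : 4 ≤ d) :
    Set.ncard {q : ℕ × ℕ × ℕ × ℕ |
        q.1 + q.2.1 + q.2.2.1 + q.2.2.2 = d ∧ d ∣ q.2.1 + 2 * q.2.2.1 + 3 * q.2.2.2} <
      (d + 1) * (d + 2) / 2 ∧
    Set.ncard (Wset d) < Nat.choose (d + 2) 2 := by
  set S : Set (ℕ × ℕ × ℕ × ℕ) := {q : ℕ × ℕ × ℕ × ℕ |
      q.1 + q.2.1 + q.2.2.1 + q.2.2.2 = d ∧ d ∣ q.2.1 + 2 * q.2.2.1 + 3 * q.2.2.2} with hS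
  -- the target finset: the triangle minus the point (0, d-1)
  have hmemT : ((0 : ℕ), d - 1) ∈ Tfin d := by
    simp [Tfin, Finset.mem_filter, Finset.mem_product, Finset.mem_range]
  have hScard : S.ncard ≤ ((Tfin d).erase (0, d - 1)).card := by
    rw [← Set.ncard_coe_finset]
    apply Set.ncard_le_ncard_of_injOn (fenc d)
    · intro q hq
      obtain ⟨hsum, hdvd⟩ := hq
      have hm := fenc_mem d hd q hsum hdvd
      simp only [Finset.coe_erase, Set.mem_diff, Finset.mem_coe, Set.mem_singleton_iff]
      refine ⟨?_, hm.2⟩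
      simp only [Tfin, Finset.mem_filter, Finset.mem_product, Finset.mem_range]
      omega
    · intro q hq q' hq' h
      exact fenc_inj d hd q q' hq.1 hq.2 hq'.1 hq'.2 h
  have hN2 : 30 ≤ (d + 1) * (d + 2) := by nlinarith
  have hErase : ((Tfin d).erase (0, d - 1)).card = (d + 1) * (d + 2) / 2 - 1 := by
    rw [Finset.card_erase_of_mem hmemT, Tfin_card]
  have part1 : S.ncard < (d + 1) * (d + 2) / 2 := by
    rw [hErase] at hScard
    omega
  refine ⟨part1, ?_⟩
  have hSfin : S.Finite := by
    apply Set.Finite.subset (Finset.finite_toSet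
      (Finset.range (d + 1) ×ˢ Finset.range (d + 1) ×ˢ Finset.range (d + 1) ×ˢ
        Finset.range (d + 1)))
    rintro ⟨a, b, c, e⟩ ⟨h1, _⟩
    simp only [Finset.coe_product, Finset.coe_range, Set.mem_prod, Set.mem_Iio] at *
    omega
  have hW : (Wset d).ncard ≤ S.ncard :=
    Set.ncard_le_ncard_of_injOn (genc d) (fun x hx => genc_mem d x hx) (genc_inj d hd) hSfin
  have hchoose : Nat.choose (d + 2) 2 = (d + 1) * (d + 2) / 2 := by
    rw [Nat.choose_two_right]
    congr 1
    have : d + 2 - 1 = d + 1 := rfl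
    rw [this, mul_comm]
  rw [hchoose]
  omega
end

section
/- Let k be a field of characteristic zero, d ≥ 4 an integer, R = k[x₀,x₁,x₂,x₃], and T_d ⊆ R the ideal generated by all monomials x₀^α x₁^β x₂^c x₃^e with α+β+c+e = d and d dividing β+2c+3e. Then for every linear form L ∈ R₁, the k-linear map from the degree-(d−1) homogeneous component of R/T_d to the degree-d homogeneous component of R/T_d induced by multiplication by L is not injective; that is, T_d fails the Weak Lefschetz Property in degree d−1. -/
open MvPolynomial

section Aux

variable {K : Type*} [Field K] {d : ℕ}

/-- Every element of the span of a set of polynomials all of which are homogeneous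
of degree `d` has zero coefficients in degrees `< d`. -/
lemma aux_coeff_zero_of_mem_span {S : Set (MvPolynomial (Fin 4) K)}
    (hS : ∀ m ∈ S, m.IsHomogeneous d)
    {p : MvPolynomial (Fin 4) K} (hp : p ∈ Ideal.span S) :
    ∀ s : Fin 4 →₀ ℕ, s.degree < d → coeff s p = 0 := by
  classical
  refine Submodule.span_induction
    (p := fun x _ => ∀ s : Fin 4 →₀ ℕ, s.degree < d → coeff s x = 0) ?_ ?_ ?_ ?_ hp
  · intro x hx s hs
    exact (hS x hx).coeff_eq_zero (by omega)
  · intro s hs; simp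
  · intro x y _ _ ihx ihy s hs; simp [ihx s hs, ihy s hs]
  · intro r x _ ih s hs
    rw [smul_eq_mul, coeff_mul]
    refine Finset.sum_eq_zero fun uv huv => ?_
    rw [Finset.HasAntidiagonal.mem_antidiagonal] at huv
    have hdeg : uv.1.degree + uv.2.degree = s.degree := by
      rw [← huv]
      simp only [Finsupp.degree_eq_weight_one, map_add]
    rw [ih uv.2 (by omega), mul_zero]

/-- a homogeneous `Finsupp` of degree 1 on `Fin 4` is a single. -/
lemma aux_single_of_degree_one {s : Fin 4 →₀ ℕ} (h : s.degree = 1) :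
    ∃ t : Fin 4, s = Finsupp.single t 1 := by
  classical
  have hsum : s 0 + s 1 + s 2 + s 3 = 1 := by
    have : s.degree = ∑ i : Fin 4, s i := by
      rw [Finsupp.degree]
      refine Finset.sum_subset (Finset.subset_univ _) ?_
      intro i _ hi
      simpa [Finsupp.mem_support_iff] using hi
    rw [this, Fin.sum_univ_four] at h
    exact h
  have hcases : (s 0 = 1 ∧ s 1 = 0 ∧ s 2 = 0 ∧ s 3 = 0) ∨
      (s 0 = 0 ∧ s 1 = 1 ∧ s 2 = 0 ∧ s 3 = 0) ∨
      (s 0 = 0 ∧ s 1 = 0 ∧ s 2 = 1 ∧ s 3 = 0) ∨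
      (s 0 = 0 ∧ s 1 = 0 ∧ s 2 = 0 ∧ s 3 = 1) := by omega
  rcases hcases with h | h | h | h
  · exact ⟨0, by ext i; fin_cases i <;> simp [Finsupp.single_apply] <;> omega⟩
  · exact ⟨1, by ext i; fin_cases i <;> simp [Finsupp.single_apply] <;> omega⟩
  · exact ⟨2, by ext i; fin_cases i <;> simp [Finsupp.single_apply] <;> omega⟩
  · exact ⟨3, by ext i; fin_cases i <;> simp [Finsupp.single_apply] <;> omega⟩

/-- Representation of a linear form. -/
lemma aux_linear_rep {L : MvPolynomial (Fin 4) K} (hL : L.IsHomogeneous 1) :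
    L = ∑ t : Fin 4, C (coeff (Finsupp.single t 1) L) * X t := by
  classical
  apply MvPolynomial.ext
  intro s
  rw [coeff_sum]
  simp only [coeff_C_mul, coeff_X']
  by_cases hdeg : s.degree = 1
  · obtain ⟨t0, rfl⟩ := aux_single_of_degree_one hdeg
    rw [Finset.sum_eq_single t0]
    · simp
    · intro t _ ht
      rw [if_neg, mul_zero]
      intro hc
      exact ht (by simpa using (Finsupp.single_left_inj (by norm_num)).mp hc)
    · simp
  · rw [hL.coeff_eq_zero hdeg]
    refine (Finset.sum_eq_zero fun t _ => ?_).symm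
    rw [if_neg, mul_zero]
    intro hc
    apply hdeg
    rw [← hc]
    simp [Finsupp.degree_single]

/-- determinant of a matrix whose `i`-th row consists of homogeneous polynomials
of degree `w i` is homogeneous of degree `∑ w i`. -/
lemma aux_det_isHomogeneous {ι : Type*} [DecidableEq ι] [Fintype ι]
    (M : Matrix ι ι (MvPolynomial (Fin 4) K)) (w : ι → ℕ)
    (h : ∀ i j, (M i j).IsHomogeneous (w i)) :
    M.det.IsHomogeneous (∑ i, w i) := by
  rw [Matrix.det_apply']
  refine IsHomogeneous.sum _ _ _ fun σ _ => ?_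
  have hprod : (∏ i, M (σ i) i).IsHomogeneous (∑ i, w i) := by
    have := IsHomogeneous.prod Finset.univ (fun i => M (σ i) i) (fun i => w (σ i))
      (fun i _ => h (σ i) i)
    rwa [Equiv.sum_comp σ w] at this
  rcases Int.units_eq_one_or (Equiv.Perm.sign σ) with hs | hs <;> rw [hs]
  · simpa using hprod
  · simpa using hprod.neg

end Aux

/-- For `d ≥ 4` and any field `K` of characteristic zero, the ideal `T_d` of
`K[x₀,x₁,x₂,x₃]` generated by the monomials `x₀^a x₁^b x₂^c x₃^e` of degree `d`
with `d ∣ b+2c+3e` fails the WLP in degree `d−1`: for every linear form `L`, the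
multiplication map `×L : (R/T_d)_{d−1} → (R/T_d)_d` is not injective, i.e. there is
a homogeneous polynomial `f` of degree `d−1` with `f ∉ T_d` and `L·f ∈ T_d`. -/
theorem stmt3 (K : Type*) [Field K] [CharZero K] (d : ℕ) (hd : 4 ≤ d)
    (Td : Ideal (MvPolynomial (Fin 4) K))
    (hTd : Td = Ideal.span {m : MvPolynomial (Fin 4) K |
      ∃ a b c e : ℕ, a + b + c + e = d ∧ d ∣ b + 2 * c + 3 * e ∧
        m = X 0 ^ a * X 1 ^ b * X 2 ^ c * X 3 ^ e})
    (L : MvPolynomial (Fin 4) K) (hL : L.IsHomogeneous 1) :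
    ∃ f : MvPolynomial (Fin 4) K,
      f.IsHomogeneous (d - 1) ∧ f ∉ Td ∧ L * f ∈ Td := by
  classical
  haveI : NeZero d := ⟨by omega⟩
  -- generators are homogeneous of degree d
  have hgen : ∀ m ∈ {m : MvPolynomial (Fin 4) K |
      ∃ a b c e : ℕ, a + b + c + e = d ∧ d ∣ b + 2 * c + 3 * e ∧
        m = X 0 ^ a * X 1 ^ b * X 2 ^ c * X 3 ^ e}, m.IsHomogeneous d := by
    rintro m ⟨a, b, c, e, habce, -, rfl⟩
    have : ((X 0 : MvPolynomial (Fin 4) K) ^ a * X 1 ^ b * X 2 ^ c * X 3 ^ e).IsHomogeneous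
        (a + b + c + e) := by
      have h0 := (isHomogeneous_X K (0 : Fin 4)).pow a
      have h1 := (isHomogeneous_X K (1 : Fin 4)).pow b
      have h2 := (isHomogeneous_X K (2 : Fin 4)).pow c
      have h3 := (isHomogeneous_X K (3 : Fin 4)).pow e
      simpa using ((h0.mul h1).mul h2).mul h3
    rwa [habce] at this
  -- if p is homogeneous of degree d-1 and nonzero, it's not in Td
  have hnotmem : ∀ p : MvPolynomial (Fin 4) K,
      p.IsHomogeneous (d - 1) → p ≠ 0 → p ∉ Td := by
    intro p hph hpne hpmem
    apply hpne
    apply MvPolynomial.ext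
    intro s
    rw [coeff_zero]
    by_cases hs : s.degree < d
    · exact aux_coeff_zero_of_mem_span hgen (hTd ▸ hpmem) s hs
    · exact hph.coeff_eq_zero (by omega)
  by_cases hL0 : L = 0
  · have hx : ((X 0 : MvPolynomial (Fin 4) K) ^ (d - 1)).IsHomogeneous (d - 1) :=
      isHomogeneous_X_pow _ _
    refine ⟨X 0 ^ (d - 1), hx, hnotmem _ hx (pow_ne_zero _ (X_ne_zero _)), ?_⟩
    rw [hL0, zero_mul]; exact Ideal.zero_mem _
  -- main case
  set a : Fin 4 → K := fun t => coeff (Finsupp.single t 1) L with ha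
  have hrep : L = ∑ t : Fin 4, C (a t) * X t := aux_linear_rep hL
  set g : ZMod d → MvPolynomial (Fin 4) K :=
    fun k => ∑ t : Fin 4, if ((t : ℕ) : ZMod d) = k then C (a t) * X t else 0 with hg
  -- cast injectivity for Fin 4 → ZMod d
  have hcast : ∀ t1 t2 : Fin 4, (((t1 : ℕ) : ZMod d) = ((t2 : ℕ) : ZMod d)) → t1 = t2 := by
    intro t1 t2 h
    have h1 : ((t1 : ℕ) : ZMod d).val = (t1 : ℕ) := ZMod.val_natCast_of_lt (by omega)
    have h2 : ((t2 : ℕ) : ZMod d).val = (t2 : ℕ) := ZMod.val_natCast_of_lt (by omega)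
    have := congrArg ZMod.val h
    rw [h1, h2] at this
    exact Fin.ext this
  have hgsum : ∑ k : ZMod d, g k = L := by
    rw [hg, Finset.sum_comm]
    rw [hrep]
    refine Finset.sum_congr rfl fun t _ => ?_
    rw [Finset.sum_ite_eq Finset.univ ((t : ℕ) : ZMod d) (fun _ => C (a t) * X t)]
    simp
  set M : Matrix (ZMod d) (ZMod d) (MvPolynomial (Fin 4) K) :=
    Matrix.of fun i j => g (j - i) with hM
  set f : MvPolynomial (Fin 4) K := (M.updateRow 0 (fun _ => 1)).det with hf
  -- row sums
  have hrowsum : ∀ j : ZMod d, (∑ k : ZMod d, M k) j = L := by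
    intro j
    erw [Finset.sum_apply]
    have : ∑ k : ZMod d, M k j = ∑ k : ZMod d, g ((Equiv.subLeft j) k) := rfl
    rw [this, Equiv.sum_comp (Equiv.subLeft j) g, hgsum]
  -- det M = L * f
  have hdetM : M.det = L * f := by
    have h1 := Matrix.det_updateRow_sum M 0 (fun _ => (1 : MvPolynomial (Fin 4) K))
    simp only [one_smul, smul_eq_mul, one_mul] at h1
    have h2 : (∑ k : ZMod d, M k) = fun _ => L := funext hrowsum
    rw [h2] at h1
    have h3 : (fun _ : ZMod d => L) = L • (fun _ : ZMod d => (1 : MvPolynomial (Fin 4) K)) := by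
      funext j; simp
    rw [h3, Matrix.det_updateRow_smul] at h1
    rw [← h1, hf]
  -- each g k is homogeneous of degree 1
  have hgh : ∀ k : ZMod d, (g k).IsHomogeneous 1 := by
    intro k
    refine IsHomogeneous.sum _ _ _ fun t _ => ?_
    split
    · exact isHomogeneous_C_mul_X _ _
    · exact isHomogeneous_zero _ _ _
  -- f is homogeneous of degree d - 1
  have hfh : f.IsHomogeneous (d - 1) := by
    have hw : (∑ i : ZMod d, (if i = 0 then (0 : ℕ) else 1)) = d - 1 := by
      have hcf : (Finset.univ.filter (fun i : ZMod d => ¬ i = 0)).card = d - 1 := by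
        have h1 : (Finset.univ.filter (fun i : ZMod d => ¬ i = 0))
            = Finset.univ.erase (0 : ZMod d) := by
          rw [← Finset.filter_ne' Finset.univ (0 : ZMod d)]
        rw [h1, Finset.card_erase_of_mem (Finset.mem_univ _), Finset.card_univ, ZMod.card]
      rw [Finset.sum_ite, Finset.sum_const_zero, Finset.sum_const, hcf, smul_eq_mul,
        mul_one, zero_add]
    rw [hf]
    have := aux_det_isHomogeneous (M.updateRow 0 (fun _ => 1))
      (fun i => if i = 0 then 0 else 1) ?_
    · rwa [hw] at this
    · intro i j
      rw [Matrix.updateRow_apply]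
      by_cases hi : i = 0
      · simp only [hi, if_pos rfl]
        exact isHomogeneous_one _ _
      · simp only [if_neg hi]
        exact hgh _
  -- det M ∈ Td
  have hMT : M.det ∈ Td := by
    rw [Matrix.det_apply']
    refine Ideal.sum_mem _ fun σ _ => Ideal.mul_mem_left _ _ ?_
    -- the product term
    have key : ∀ c : ZMod d → ZMod d, (∑ i : ZMod d, c i) = 0 →
        (∏ i : ZMod d, g (c i)) ∈ Td := by
      intro c hc
      by_cases hall : ∀ i : ZMod d, ∃ t : Fin 4, ((t : ℕ) : ZMod d) = c i
      · choose τ hτ using hall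
        have hgt : ∀ i, g (c i) = C (a (τ i)) * X (τ i) := by
          intro i
          show (∑ t : Fin 4, if ((t : ℕ) : ZMod d) = c i then C (a t) * X t else 0)
            = C (a (τ i)) * X (τ i)
          rw [Finset.sum_eq_single (τ i)]
          · rw [if_pos (hτ i)]
          · intro t _ ht
            rw [if_neg]
            intro hcond
            exact ht (hcast t (τ i) (by rw [hcond, hτ i]))
          · simp
        rw [Finset.prod_congr rfl fun i _ => hgt i, Finset.prod_mul_distrib]
        refine Ideal.mul_mem_left _ _ ?_
        set n : Fin 4 → ℕ := fun t => (Finset.univ.filter (fun i => τ i = t)).card with hn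
        have hprod : (∏ i : ZMod d, (X (τ i) : MvPolynomial (Fin 4) K))
            = ∏ t : Fin 4, X t ^ n t := by
          rw [← Finset.prod_fiberwise_of_maps_to (fun i _ => Finset.mem_univ (τ i))
            (fun i => (X (τ i) : MvPolynomial (Fin 4) K))]
          refine Finset.prod_congr rfl fun t _ => ?_
          rw [Finset.prod_congr rfl (fun i hi => by
            rw [(Finset.mem_filter.mp hi).2]), Finset.prod_const, hn]
        have hcard : n 0 + n 1 + n 2 + n 3 = d := by
          have h1 := Finset.card_eq_sum_card_fiberwise
            (f := τ) (s := (Finset.univ : Finset (ZMod d)))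
            (t := (Finset.univ : Finset (Fin 4)))
            (fun i _ => Finset.mem_univ (τ i))
          rw [Finset.card_univ, ZMod.card, Fin.sum_univ_four] at h1
          rw [← h1]
        have hsumval : ∑ i : ZMod d, ((τ i : ℕ)) = n 1 + 2 * n 2 + 3 * n 3 := by
          rw [← Finset.sum_fiberwise_of_maps_to (fun i _ => Finset.mem_univ (τ i))
            (fun i => ((τ i : ℕ)))]
          have : ∀ t : Fin 4, ∑ i ∈ Finset.univ.filter (fun i => τ i = t), ((τ i : ℕ))
              = n t * (t : ℕ) := by
            intro t
            rw [Finset.sum_congr rfl (fun i hi => by rw [(Finset.mem_filter.mp hi).2]),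
              Finset.sum_const, hn, smul_eq_mul]
          rw [Fin.sum_univ_four, this 0, this 1, this 2, this 3]
          have c0 : ((0 : Fin 4) : ℕ) = 0 := rfl
          have c1 : ((1 : Fin 4) : ℕ) = 1 := rfl
          have c2 : ((2 : Fin 4) : ℕ) = 2 := rfl
          have c3 : ((3 : Fin 4) : ℕ) = 3 := rfl
          rw [c0, c1, c2, c3]
          ring
        have hdvd : d ∣ ∑ i : ZMod d, ((τ i : ℕ)) := by
          rw [← ZMod.natCast_eq_zero_iff _ d]
          push_cast
          have : ∑ i : ZMod d, (((τ i : ℕ) : ZMod d)) = ∑ i : ZMod d, c i :=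
            Finset.sum_congr rfl fun i _ => hτ i
          rw [this, hc]
        rw [hprod, Fin.prod_univ_four, hTd]
        apply Ideal.subset_span
        exact ⟨n 0, n 1, n 2, n 3, hcard, hsumval ▸ hdvd, rfl⟩
      · push_neg at hall
        obtain ⟨i, hi⟩ := hall
        have : g (c i) = 0 := Finset.sum_eq_zero fun t _ => if_neg (hi t)
        rw [Finset.prod_eq_zero (Finset.mem_univ i) this]
        exact Ideal.zero_mem _
    have hsumc : ∑ i : ZMod d, (i - σ i) = 0 := by
      rw [Finset.sum_sub_distrib]
      have : ∑ i : ZMod d, σ i = ∑ i : ZMod d, i :=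
        Fintype.sum_equiv σ _ _ (fun i => rfl)
      rw [this, sub_self]
    exact key (fun i => i - σ i) hsumc
  -- f ≠ 0
  have hane : ∃ t : Fin 4, a t ≠ 0 := by
    by_contra hcon
    push_neg at hcon
    apply hL0
    rw [hrep]
    simp [hcon]
  obtain ⟨t, hat⟩ := hane
  have hdetne : M.det ≠ 0 := by
    set u : Fin 4 → K := fun j => if j = t then 1 else 0 with hu
    intro hzero
    have heval : eval u M.det = 0 := by rw [hzero, map_zero]
    rw [RingHom.map_det, RingHom.mapMatrix_apply] at heval
    have hevalg : ∀ k : ZMod d, eval u (g k)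
        = if ((t : ℕ) : ZMod d) = k then a t else 0 := by
      intro k
      simp only [hg, map_sum]
      rw [Finset.sum_eq_single t]
      · rw [apply_ite (eval u)]
        simp [hu]
      · intro t' _ ht'
        rw [apply_ite (eval u)]
        simp [hu, ht']
      · simp
    have hmap : M.map (eval u) = (a t) •
        ((Equiv.addRight ((t : ℕ) : ZMod d)).permMatrix K) := by
      ext i j
      rw [Matrix.map_apply]
      show eval u (g (j - i)) = _
      rw [hevalg]
      simp only [Matrix.smul_apply, Equiv.Perm.permMatrix, PEquiv.toMatrix_apply,
        Equiv.toPEquiv_apply, Option.mem_def, Option.some.injEq, smul_eq_mul,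
        Equiv.coe_addRight]
      by_cases hc : ((t : ℕ) : ZMod d) = j - i
      · rw [if_pos hc, if_pos (show i + ((t : ℕ) : ZMod d) = j by rw [hc]; ring), mul_one]
      · rw [if_neg hc, if_neg (fun h => hc (by rw [← h]; ring)), mul_zero]
    rw [hmap, Matrix.det_smul, Matrix.det_permutation, ZMod.card] at heval
    rcases Int.units_eq_one_or (Equiv.Perm.sign (Equiv.addRight ((t : ℕ) : ZMod d))) with hs | hs <;>
        rw [hs] at heval <;> simp at heval <;>
      exact hat ((pow_eq_zero_iff (by omega : d ≠ 0)).mp (by simpa using heval))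
  have hfne : f ≠ 0 := by
    intro h
    rw [h, mul_zero] at hdetM
    exact hdetne hdetM
  exact ⟨f, hfh, hnotmem f hfh hfne, hdetM ▸ hMT⟩
end

section
/- For every integer d ≥ 4, let M : ℤ^{W_d} → ℤ⁴ be the group homomorphism sending v to (∑_{x∈W_d} v_x, ∑_{x∈W_d} v_x·r_x, ∑_{x∈W_d} v_x·γ_x, ∑_{x∈W_d} v_x·δ_x), where x = (r_x,γ_x,δ_x). Then the subgroup of ℤ^{W_d} generated by the vectors e_a + e_b − e_c − e_{d'} over all a,b,c,d' ∈ W_d with a + b = c + d' in ℤ³ equals ker M, and ker M is a free abelian group of rank (#W_d) − 4. (In particular the lattice L_η generated by the lattice points of the suitable 2-binomials is saturated of rank μ(T_d) − 4.) -/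
namespace Stmt4
variable (d : ℕ)

lemma mem_Wset (r γ δ : ℤ) : ((r,γ,δ) ∈ Wset d) ↔
    (0 ≤ r ∧ r ≤ 3 ∧ 0 ≤ γ ∧ 0 ≤ δ ∧ 0 ≤ δ + 2*γ + (1-r)*(d:ℤ) ∧ 2*δ + 3*γ ≤ r*(d:ℤ)) :=
  Iff.rfl

abbrev V := ↥(Wset d) →₀ ℤ

/-- the lattice generated by suitable 2-binomials -/
noncomputable def L : AddSubgroup (V d) := AddSubgroup.closure {v : ↥(Wset d) →₀ ℤ |
        ∃ a b c e : ↥(Wset d), a.val + b.val = c.val + e.val ∧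
          v = Finsupp.single a 1 + Finsupp.single b 1
              - Finsupp.single c 1 - Finsupp.single e 1}

def oW : ↥(Wset d) := ⟨(0,0,0), by rw [mem_Wset]; omega⟩
def pW : ↥(Wset d) := ⟨(1,0,0), by rw [mem_Wset]; omega⟩

variable {d} (hd : 4 ≤ d)

def gW : ↥(Wset d) := ⟨(1,1,0), by rw [mem_Wset]; omega⟩
def hW : ↥(Wset d) := ⟨(1,0,1), by rw [mem_Wset]; omega⟩

/-- defect of x : difference between e_x and its normal form -/
noncomputable def DD (x : ↥(Wset d)) : V d :=
  Finsupp.single x 1 - (1 - x.val.1) • Finsupp.single (oW d) 1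
    - (x.val.1 - x.val.2.1 - x.val.2.2) • Finsupp.single (pW d) 1
    - x.val.2.1 • Finsupp.single (gW hd) 1
    - x.val.2.2 • Finsupp.single (hW hd) 1

lemma gen_mem {a b c e : ↥(Wset d)} (h : a.val + b.val = c.val + e.val) :
    Finsupp.single a 1 + Finsupp.single b 1 - Finsupp.single c 1 - Finsupp.single e 1 ∈ L d :=
  AddSubgroup.subset_closure ⟨a, b, c, e, h, rfl⟩

lemma step {a b c e : ↥(Wset d)} (h : a.val + b.val = c.val + e.val)
    (hb : DD hd b ∈ L d) (hc : DD hd c ∈ L d) (he : DD hd e ∈ L d) : DD hd a ∈ L d := by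
  have h1 : a.val.1 + b.val.1 = c.val.1 + e.val.1 := by
    have := congrArg Prod.fst h; simpa using this
  have h2 : a.val.2.1 + b.val.2.1 = c.val.2.1 + e.val.2.1 := by
    have := congrArg (fun x => x.2.1) h; simpa using this
  have h3 : a.val.2.2 + b.val.2.2 = c.val.2.2 + e.val.2.2 := by
    have := congrArg (fun x : ℤ×ℤ×ℤ => x.2.2) h; simpa using this
  have key : DD hd a = (Finsupp.single a 1 + Finsupp.single b 1
      - Finsupp.single c 1 - Finsupp.single e 1) - DD hd b + DD hd c + DD hd e := by
    unfold DD
    match_scalars <;> linarith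
  rw [key]
  exact add_mem (add_mem (sub_mem (gen_mem h) hb) hc) he

lemma DD_oW : DD hd (oW d) = 0 := by simp [DD, oW]
lemma DD_pW : DD hd (pW d) = 0 := by simp [DD, pW]
lemma DD_gW : DD hd (gW hd) = 0 := by simp [DD, gW]
lemma DD_hW : DD hd (hW hd) = 0 := by simp [DD, hW]


lemma DD_oW_mem : DD hd (oW d) ∈ L d := by rw [DD_oW]; exact zero_mem _
lemma DD_pW_mem : DD hd (pW d) ∈ L d := by rw [DD_pW]; exact zero_mem _
lemma DD_gW_mem : DD hd (gW hd) ∈ L d := by rw [DD_gW]; exact zero_mem _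
lemma DD_hW_mem : DD hd (hW hd) ∈ L d := by rw [DD_hW]; exact zero_mem _

lemma r1 : ∀ (n : ℕ) (γ δ : ℤ) (hm : ((1:ℤ),γ,δ) ∈ Wset d), γ + δ ≤ n →
    DD hd ⟨(1,γ,δ),hm⟩ ∈ L d := by
  intro n
  induction n with
  | zero =>
    intro γ δ hm hn
    rw [mem_Wset] at hm
    have hγ : γ = 0 := by omega
    have hδ : δ = 0 := by omega
    subst hγ hδ
    exact DD_pW_mem hd
  | succ n ih =>
    intro γ δ hm hn
    rw [mem_Wset] at hm
    by_cases hδ : 1 ≤ δ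
    · have hmc : ((1:ℤ),γ,δ-1) ∈ Wset d := by rw [mem_Wset]; omega
      refine step hd (a := ⟨(1,γ,δ),hm⟩) (b := pW d) (c := ⟨(1,γ,δ-1),hmc⟩) (e := hW hd)
        ?_ (DD_pW_mem hd) (ih γ (δ-1) hmc (by omega)) (DD_hW_mem hd)
      show ((1:ℤ),γ,δ) + (1,0,0) = (1,γ,δ-1) + (1,0,1)
      simp [Prod.ext_iff]
    · by_cases hγ : 1 ≤ γ
      · have hmc : ((1:ℤ),γ-1,δ) ∈ Wset d := by rw [mem_Wset]; omega
        refine step hd (a := ⟨(1,γ,δ),hm⟩) (b := pW d) (c := ⟨(1,γ-1,δ),hmc⟩) (e := gW hd)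
          ?_ (DD_pW_mem hd) (ih (γ-1) δ hmc (by omega)) (DD_gW_mem hd)
        show ((1:ℤ),γ,δ) + (1,0,0) = (1,γ-1,δ) + (1,1,0)
        simp [Prod.ext_iff]
      · have hγ0 : γ = 0 := by omega
        have hδ0 : δ = 0 := by omega
        subst hγ0 hδ0
        exact DD_pW_mem hd


lemma r20 : ∀ (n : ℕ) (γ : ℤ) (hm : ((2:ℤ),γ,0) ∈ Wset d), γ ≤ n →
    DD hd ⟨(2,γ,0),hm⟩ ∈ L d := by
  intro n
  induction n with
  | zero => intro γ hm hn; rw [mem_Wset] at hm; omega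
  | succ n ih =>
    intro γ hm hn
    rw [mem_Wset] at hm
    by_cases hred : (d:ℤ) + 2 ≤ 2*γ
    · -- reduce γ by one
      have hmc : ((2:ℤ),γ-1,0) ∈ Wset d := by rw [mem_Wset]; omega
      refine step hd (a := ⟨(2,γ,0),hm⟩) (b := pW d) (c := ⟨(2,γ-1,0),hmc⟩) (e := gW hd)
        ?_ (DD_pW_mem hd) (ih (γ-1) hmc (by omega)) (DD_gW_mem hd)
      show ((2:ℤ),γ,0) + (1,0,0) = (2,γ-1,0) + (1,1,0)
      simp [Prod.ext_iff]
    · by_cases hd5 : d = 5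
      · -- special chain for d = 5, γ = 3
        subst hd5
        have hγ : γ = 3 := by omega
        subst hγ
        have hm111 : ((1:ℤ),1,1) ∈ Wset 5 := by rw [mem_Wset]; omega
        have hm102 : ((1:ℤ),0,2) ∈ Wset 5 := by rw [mem_Wset]; omega
        have s1 : DD hd ⟨(1,1,1),hm111⟩ ∈ L 5 := r1 hd 2 1 1 hm111 (by omega)
        have s2 : DD hd ⟨(1,0,2),hm102⟩ ∈ L 5 := r1 hd 2 0 2 hm102 (by omega)
        have hm213 : ((2:ℤ),1,3) ∈ Wset 5 := by rw [mem_Wset]; omega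
        have t1 : DD hd ⟨(2,1,3),hm213⟩ ∈ L 5 := by
          refine step hd (b := oW 5) (c := ⟨(1,1,1),hm111⟩) (e := ⟨(1,0,2),hm102⟩)
            ?_ (DD_oW_mem hd) s1 s2
          show ((2:ℤ),1,3) + (0,0,0) = (1,1,1) + (1,0,2)
          simp [Prod.ext_iff]
        have hm221 : ((2:ℤ),2,1) ∈ Wset 5 := by rw [mem_Wset]; omega
        have t2 : DD hd ⟨(2,2,1),hm221⟩ ∈ L 5 := by
          refine step hd (b := ⟨(1,0,2),hm102⟩) (c := ⟨(2,1,3),hm213⟩) (e := gW hd)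
            ?_ s2 t1 (DD_gW_mem hd)
          show ((2:ℤ),2,1) + (1,0,2) = (2,1,3) + (1,1,0)
          simp [Prod.ext_iff]
        have hm222 : ((2:ℤ),2,2) ∈ Wset 5 := by rw [mem_Wset]; omega
        have t3 : DD hd ⟨(2,2,2),hm222⟩ ∈ L 5 := by
          refine step hd (b := pW 5) (c := ⟨(2,2,1),hm221⟩) (e := hW hd)
            ?_ (DD_pW_mem hd) t2 (DD_hW_mem hd)
          show ((2:ℤ),2,2) + (1,0,0) = (2,2,1) + (1,0,1)
          simp [Prod.ext_iff]
        refine step hd (b := ⟨(1,0,2),hm102⟩) (c := ⟨(2,2,2),hm222⟩) (e := gW hd)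
          ?_ s2 t3 (DD_gW_mem hd)
        show ((2:ℤ),3,0) + (1,0,2) = (2,2,2) + (1,1,0)
        simp [Prod.ext_iff]
      · -- base: split γ = γ₁ + γ₂ with 3γᵢ ≤ d
        set γ₁ : ℤ := ((d / 3 : ℕ) : ℤ) with hγ₁
        have hdiv : 3 * γ₁ ≤ (d:ℤ) ∧ (d:ℤ) ≤ 3 * γ₁ + 2 := by
          constructor <;> omega
        have hm1 : ((1:ℤ),γ₁,0) ∈ Wset d := by rw [mem_Wset]; omega
        have hm2 : ((1:ℤ),γ-γ₁,0) ∈ Wset d := by rw [mem_Wset]; omega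
        refine step hd (a := ⟨(2,γ,0),hm⟩) (b := oW d) (c := ⟨(1,γ₁,0),hm1⟩)
          (e := ⟨(1,γ-γ₁,0),hm2⟩) ?_ (DD_oW_mem hd)
          (r1 hd γ₁.toNat γ₁ 0 hm1 (by omega)) (r1 hd (γ-γ₁).toNat (γ-γ₁) 0 hm2 (by omega))
        show ((2:ℤ),γ,0) + (0,0,0) = (1,γ₁,0) + (1,γ-γ₁,0)
        simp [Prod.ext_iff]


lemma r2 : ∀ (n : ℕ) (γ δ : ℤ) (hm : ((2:ℤ),γ,δ) ∈ Wset d), δ ≤ n →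
    DD hd ⟨(2,γ,δ),hm⟩ ∈ L d := by
  intro n
  induction n with
  | zero =>
    intro γ δ hm hn
    have hδ : δ = 0 := by rw [mem_Wset] at hm; omega
    subst hδ
    exact r20 hd γ.toNat γ hm (by rw [mem_Wset] at hm; omega)
  | succ n ih =>
    intro γ δ hm hn
    have hm' := hm; rw [mem_Wset] at hm'
    by_cases h2 : 2 ≤ δ
    · -- trade: (2,γ,δ) + (1,1,0) = (2,γ+1,δ-2) + (1,0,2)
      have hm102 : ((1:ℤ),0,2) ∈ Wset d := by rw [mem_Wset]; omega
      have hmc : ((2:ℤ),γ+1,δ-2) ∈ Wset d := by rw [mem_Wset]; omega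
      refine step hd (a := ⟨(2,γ,δ),hm⟩) (b := gW hd) (c := ⟨(2,γ+1,δ-2),hmc⟩)
        (e := ⟨(1,0,2),hm102⟩) ?_ (DD_gW_mem hd) (ih (γ+1) (δ-2) hmc (by omega))
        (r1 hd 2 0 2 hm102 (by omega))
      show ((2:ℤ),γ,δ) + (1,1,0) = (2,γ+1,δ-2) + (1,0,2)
      simp [Prod.ext_iff]
    · by_cases h1 : δ = 1
      · subst h1
        by_cases hb : (d:ℤ) ≤ 2*γ
        · -- (2,γ,1) + (1,0,0) = (2,γ,0) + (1,0,1)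
          have hmc : ((2:ℤ),γ,0) ∈ Wset d := by rw [mem_Wset]; omega
          refine step hd (a := ⟨(2,γ,1),hm⟩) (b := pW d) (c := ⟨(2,γ,0),hmc⟩) (e := hW hd)
            ?_ (DD_pW_mem hd) (r20 hd γ.toNat γ hmc (by omega)) (DD_hW_mem hd)
          show ((2:ℤ),γ,1) + (1,0,0) = (2,γ,0) + (1,0,1)
          simp [Prod.ext_iff]
        · -- 2γ = d - 1, d odd (so d ≥ 5)
          have hm102 : ((1:ℤ),0,2) ∈ Wset d := by rw [mem_Wset]; omega
          have s2 := r1 hd 2 0 2 hm102 (by omega)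
          have hmA : ((2:ℤ),γ+1,0) ∈ Wset d := by rw [mem_Wset]; omega
          have hA := r20 hd (γ+1).toNat (γ+1) hmA (by omega)
          have hmB : ((2:ℤ),γ,2) ∈ Wset d := by rw [mem_Wset]; omega
          have hB : DD hd ⟨(2,γ,2),hmB⟩ ∈ L d := by
            refine step hd (b := gW hd) (c := ⟨(2,γ+1,0),hmA⟩) (e := ⟨(1,0,2),hm102⟩)
              ?_ (DD_gW_mem hd) hA s2
            show ((2:ℤ),γ,2) + (1,1,0) = (2,γ+1,0) + (1,0,2)
            simp [Prod.ext_iff]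
          refine step hd (a := ⟨(2,γ,1),hm⟩) (b := hW hd) (c := ⟨(2,γ,2),hmB⟩) (e := pW d)
            ?_ (DD_hW_mem hd) hB (DD_pW_mem hd)
          show ((2:ℤ),γ,1) + (1,0,1) = (2,γ,2) + (1,0,0)
          simp [Prod.ext_iff]
      · have hδ : δ = 0 := by omega
        subst hδ
        exact r20 hd γ.toNat γ hm (by omega)

lemma r3 (γ δ : ℤ) (hm : ((3:ℤ),γ,δ) ∈ Wset d) : DD hd ⟨(3,γ,δ),hm⟩ ∈ L d := by
  have hm' := hm; rw [mem_Wset] at hm'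
  have hγ : γ = (d:ℤ) := by omega
  have hδ : δ = 0 := by omega
  subst hγ hδ
  set c₂ : ℤ := (((d+1) / 2 : ℕ) : ℤ) with hc₂
  have hc : 2 * c₂ = (d:ℤ) ∨ 2 * c₂ = (d:ℤ) + 1 := by omega
  have hmc : ((2:ℤ),c₂,0) ∈ Wset d := by rw [mem_Wset]; omega
  have hme : ((2:ℤ),(d:ℤ)-c₂,1) ∈ Wset d := by rw [mem_Wset]; omega
  refine step hd (b := hW hd) (c := ⟨(2,c₂,0),hmc⟩) (e := ⟨(2,(d:ℤ)-c₂,1),hme⟩)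
    ?_ (DD_hW_mem hd) (r20 hd c₂.toNat c₂ hmc (by omega))
    (r2 hd 1 ((d:ℤ)-c₂) 1 hme (by omega))
  show ((3:ℤ),(d:ℤ),0) + (1,0,1) = (2,c₂,0) + (2,(d:ℤ)-c₂,1)
  simp [Prod.ext_iff]

lemma Dmem (x : ↥(Wset d)) : DD hd x ∈ L d := by
  obtain ⟨⟨r, γ, δ⟩, hx⟩ := x
  have hx' := hx; rw [mem_Wset] at hx'
  have hr : r = 0 ∨ r = 1 ∨ r = 2 ∨ r = 3 := by omega
  rcases hr with h | h | h | h <;> subst h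
  · have hγ : γ = 0 := by omega
    have hδ : δ = 0 := by omega
    subst hγ hδ
    exact DD_oW_mem hd
  · exact r1 hd (γ+δ).toNat γ δ hx (by omega)
  · exact r2 hd δ.toNat γ δ hx (by omega)
  · exact r3 hd γ δ hx


/-- the section `β : ℤ⁴ → ℤ^{W_d}` of `M` -/
noncomputable def beta : (ℤ × ℤ × ℤ × ℤ) →+ V d where
  toFun q := (q.1 - q.2.1) • Finsupp.single (oW d) 1
    + (q.2.1 - q.2.2.1 - q.2.2.2) • Finsupp.single (pW d) 1
    + q.2.2.1 • Finsupp.single (gW hd) 1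
    + q.2.2.2 • Finsupp.single (hW hd) 1
  map_zero' := by simp
  map_add' x y := by
    simp only [Prod.fst_add, Prod.snd_add]
    match_scalars <;> ring

variable (M : (↥(Wset d) →₀ ℤ) →+ ℤ × ℤ × ℤ × ℤ)
    (hM : ∀ v : ↥(Wset d) →₀ ℤ,
      M v = (v.sum fun _ n => n,
             v.sum fun x n => n * x.val.1,
             v.sum fun x n => n * x.val.2.1,
             v.sum fun x n => n * x.val.2.2))

include hd hM

lemma Msingle (x : ↥(Wset d)) (n : ℤ) :
    M (Finsupp.single x n) = (n, n * x.val.1, n * x.val.2.1, n * x.val.2.2) := by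
  rw [hM]
  simp [Finsupp.sum_single_index]

lemma Mbeta (q : ℤ × ℤ × ℤ × ℤ) : M (beta hd q) = q := by
  obtain ⟨q1, q2, q3, q4⟩ := q
  simp only [beta, AddMonoidHom.coe_mk, ZeroHom.coe_mk, map_add, map_zsmul,
    Msingle hd M hM]
  simp [oW, pW, gW, hW, Prod.ext_iff, smul_eq_mul]
  omega

lemma sub_beta_mem (v : V d) : v - beta hd (M v) ∈ L d := by
  induction v using Finsupp.induction with
  | zero => simp only [map_zero, sub_zero]; exact zero_mem _
  | single_add a n f _ _ ihf =>
    have key : Finsupp.single a n + f - beta hd (M (Finsupp.single a n + f))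
        = (Finsupp.single a n - beta hd (M (Finsupp.single a n))) + (f - beta hd (M f)) := by
      rw [map_add, map_add]; abel
    rw [key]
    refine add_mem ?_ ihf
    have hs : Finsupp.single a n - beta hd (M (Finsupp.single a n)) = n • DD hd a := by
      rw [Msingle hd M hM]
      have h1 : Finsupp.single a n = n • Finsupp.single a (1:ℤ) := by
        simp [Finsupp.smul_single]
      rw [h1]
      simp only [beta, DD, AddMonoidHom.coe_mk, ZeroHom.coe_mk]
      match_scalars <;> ring
    rw [hs]
    exact AddSubgroup.zsmul_mem _ (Dmem hd a) n

lemma ker_eq : L d = M.ker := by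
  apply le_antisymm
  · rw [L, AddSubgroup.closure_le]
    rintro v ⟨a, b, c, e, h, rfl⟩
    have h1 : a.val.1 + b.val.1 = c.val.1 + e.val.1 := by
      have := congrArg Prod.fst h; simpa using this
    have h2 : a.val.2.1 + b.val.2.1 = c.val.2.1 + e.val.2.1 := by
      have := congrArg (fun x : ℤ×ℤ×ℤ => x.2.1) h; simpa using this
    have h3 : a.val.2.2 + b.val.2.2 = c.val.2.2 + e.val.2.2 := by
      have := congrArg (fun x : ℤ×ℤ×ℤ => x.2.2) h; simpa using this
    simp only [SetLike.mem_coe, AddMonoidHom.mem_ker, map_sub, map_add,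
      Msingle hd M hM, one_mul]
    simp only [Prod.mk_add_mk, Prod.mk_sub_mk, Prod.mk.injEq, Prod.ext_iff, Prod.fst_zero, Prod.snd_zero]
    refine ⟨by omega, by omega, by omega, by omega⟩
  · intro v hv
    rw [AddMonoidHom.mem_ker] at hv
    have := sub_beta_mem hd M hM v
    rwa [hv, map_zero, sub_zero] at this


omit hd hM in
lemma Wfinite : (Wset d).Finite := by
  apply Set.Finite.subset
    (((Set.finite_Icc (0:ℤ) 3).prod ((Set.finite_Icc (0:ℤ) d).prod
      (Set.finite_Icc (0:ℤ) (2*d)))))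
  rintro ⟨r, γ, δ⟩ hx
  rw [mem_Wset] at hx
  simp only [Set.mem_prod, Set.mem_Icc]
  obtain ⟨h1, h2, h3, h4, h5, h6⟩ := hx
  have h7 : r * (d:ℤ) ≤ 3 * d := by nlinarith
  omega

lemma basis_ker :
    Nonempty (Module.Basis (Fin (Nat.card ↥(Wset d) - 4)) ℤ ↥M.ker) := by
  have hfin : Finite ↥(Wset d) := (Wfinite (d := d)).to_subtype
  letI : Fintype ↥(Wset d) := Fintype.ofFinite _
  let M' := M.toIntLinearMap
  let β' := (beta hd).toIntLinearMap
  have hsec : ∀ q, M' (β' q) = q := fun q => Mbeta hd M hM q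
  let K := LinearMap.ker M'
  let T : V d →ₗ[ℤ] V d := LinearMap.id - β' ∘ₗ M'
  have hmem : ∀ v, T v ∈ K := fun v => by
    simp [T, K, LinearMap.mem_ker, map_sub, hsec]
  let f : V d →ₗ[ℤ] ↥K × (ℤ × ℤ × ℤ × ℤ) :=
    (LinearMap.codRestrict K T hmem).prod M'
  let g : (↥K × (ℤ × ℤ × ℤ × ℤ)) →ₗ[ℤ] V d := (K.subtype).coprod β'
  have hfg : f ∘ₗ g = LinearMap.id := by
    apply LinearMap.ext
    rintro ⟨⟨k, hk⟩, q⟩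
    have hk0 : M' k = 0 := hk
    apply Prod.ext
    · apply Subtype.ext
      simp [f, g, T, map_add, hk0, hsec]
    · simp [f, g, T, map_add, hk0, hsec]
  have hgf : g ∘ₗ f = LinearMap.id := by
    apply LinearMap.ext
    intro v
    simp [f, g, T]
  let e : V d ≃ₗ[ℤ] (↥K × (ℤ × ℤ × ℤ × ℤ)) := LinearEquiv.ofLinear f g hfg hgf
  obtain ⟨n, bK⟩ := Submodule.basisOfPid
    (Finsupp.basisSingleOne : Module.Basis ↥(Wset d) ℤ (V d)) K
  haveI := Module.Free.of_basis bK
  haveI := Module.Finite.of_basis bK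
  have hVr : Module.finrank ℤ (V d) = Fintype.card ↥(Wset d) :=
    Module.finrank_finsupp_self ℤ
  have hprod : Module.finrank ℤ (V d) = Module.finrank ℤ ↥K + 4 := by
    rw [e.finrank_eq, Module.finrank_prod]
    congr 1
    simp [Module.finrank_prod, Module.finrank_self]
  have hK : Module.finrank ℤ ↥K = n := by
    rw [Module.finrank_eq_card_basis bK, Fintype.card_fin]
  have hcard : Nat.card ↥(Wset d) = Fintype.card ↥(Wset d) := Nat.card_eq_fintype_card
  have hn : n = Nat.card ↥(Wset d) - 4 := by omega
  have φ : ↥K ≃ₗ[ℤ] ↥M.ker := AddEquiv.toIntLinearEquiv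
    { toFun := fun x => ⟨x.1, by
        have := x.2
        exact this⟩
      invFun := fun x => ⟨x.1, by
        have := x.2
        exact this⟩
      left_inv := fun _ => rfl
      right_inv := fun _ => rfl
      map_add' := fun _ _ => rfl }
  exact ⟨(bK.reindex (finCongr hn)).map φ⟩

end Stmt4

/-- For `d ≥ 4`, let `M : ℤ^{W_d} → ℤ⁴` send `v` to
`(∑ v_x, ∑ v_x r_x, ∑ v_x γ_x, ∑ v_x δ_x)`. The subgroup of `ℤ^{W_d}` generated by
the vectors `e_a + e_b − e_c − e_{d'}` with `a + b = c + d'` in `ℤ³` is exactly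
`ker M`, and `ker M` is free abelian of rank `#W_d − 4`. -/
theorem stmt4 (d : ℕ) (hd : 4 ≤ d)
    (M : (↥(Wset d) →₀ ℤ) →+ ℤ × ℤ × ℤ × ℤ)
    (hM : ∀ v : ↥(Wset d) →₀ ℤ,
      M v = (v.sum fun _ n => n,
             v.sum fun x n => n * x.val.1,
             v.sum fun x n => n * x.val.2.1,
             v.sum fun x n => n * x.val.2.2)) :
    AddSubgroup.closure {v : ↥(Wset d) →₀ ℤ |
        ∃ a b c e : ↥(Wset d), a.val + b.val = c.val + e.val ∧
          v = Finsupp.single a 1 + Finsupp.single b 1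
              - Finsupp.single c 1 - Finsupp.single e 1} = M.ker ∧
    Nonempty (Module.Basis (Fin (Nat.card ↥(Wset d) - 4)) ℤ ↥M.ker) := by
  have h1 := Stmt4.ker_eq hd M hM
  exact ⟨h1, Stmt4.basis_ker hd M hM⟩
end

section
/- Let d = 2k+1 ≥ 5 be an odd integer and k a field. For every 0 ≤ δ ≤ k−1, the binomial w_{(0,0,0)}w_{(2,0,d)}w_{(1,0,δ)} − w_{(1,0,k)}² w_{(1,0,δ+1)} lies in ker ψ but does not lie in the ideal of k[w_x : x ∈ W_d] generated by the quadratic binomials {w_a w_b − w_c w_{d'} : a+b = c+d' in ℤ³}. In particular, for odd d the ideal generated by these quadratic binomials is strictly contained in ker ψ. -/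
open MvPolynomial

/-- The toric parametrization `ψ : k[w_x : x ∈ W_d] → k[x,y,z,t]`,
`w_{(r,γ,δ)} ↦ x^{δ+2γ+(1−r)d} y^{rd−2δ−3γ} z^δ t^γ`. -/
noncomputable def psi (d : ℕ) (K : Type*) [CommSemiring K] :
    MvPolynomial ↥(Wset d) K →ₐ[K] MvPolynomial (Fin 4) K :=
  aeval fun x =>
    X 0 ^ ((x.val.2.2 + 2 * x.val.2.1 + (1 - x.val.1) * (d : ℤ)).toNat) *
    X 1 ^ ((x.val.1 * (d : ℤ) - 2 * x.val.2.2 - 3 * x.val.2.1).toNat) *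
    X 2 ^ (x.val.2.2.toNat) *
    X 3 ^ (x.val.2.1.toNat)

lemma key9 (d k δ : ℕ) (hdk : d = 2*k+1) (hd : 5 ≤ d) (hδ : δ+1 ≤ k)
    {a b c e : ℤ×ℤ×ℤ} (ha : a ∈ Wset d) (hb : b ∈ Wset d) (hc : c ∈ Wset d) (he : e ∈ Wset d)
    (hA : a = ((0:ℤ),0,0) ∨ a = ((2:ℤ),0,(d:ℤ)) ∨ a = ((1:ℤ),0,(δ:ℤ)))
    (hB : b = ((0:ℤ),0,0) ∨ b = ((2:ℤ),0,(d:ℤ)) ∨ b = ((1:ℤ),0,(δ:ℤ)))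
    (hne : a ≠ b) (hsum : a + b = c + e) :
    (c = a ∧ e = b) ∨ (c = b ∧ e = a) := by
  obtain ⟨c1,c2,c3⟩ := c
  obtain ⟨e1,e2,e3⟩ := e
  rcases hA with rfl|rfl|rfl <;> rcases hB with rfl|rfl|rfl <;>
    first
    | exact absurd rfl hne
    | (simp only [Wset, Set.mem_setOf_eq, Prod.mk.injEq, Prod.mk_add_mk] at ha hb hc he hsum ⊢
       obtain ⟨hc1, hc2, hc3, hc4, hc5, hc6⟩ := hc
       obtain ⟨he1, he2, he3, he4, he5, he6⟩ := he
       interval_cases c1 <;> interval_cases e1 <;> omega)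

lemma div39 {σ : Type*} [DecidableEq σ] {v1 v2 v3 a b : σ} (h12 : v1 ≠ v2) (h13 : v1 ≠ v3)
    (h23 : v2 ≠ v3)
    (h : Finsupp.single a 1 + Finsupp.single b 1 ≤
      Finsupp.single v1 1 + Finsupp.single v2 1 + Finsupp.single v3 1) :
    a ≠ b ∧ (a = v1 ∨ a = v2 ∨ a = v3) ∧ (b = v1 ∨ b = v2 ∨ b = v3) := by
  rw [Finsupp.le_def] at h
  have hle1 : ∀ x : σ,
      ((Finsupp.single v1 1 + Finsupp.single v2 1 + Finsupp.single v3 1 : σ →₀ ℕ)) x ≤ 1 := by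
    intro x
    simp only [Finsupp.add_apply, Finsupp.single_apply]
    split_ifs <;> simp_all
  have hmem : ∀ x : σ,
      1 ≤ ((Finsupp.single v1 1 + Finsupp.single v2 1 + Finsupp.single v3 1 : σ →₀ ℕ)) x →
      x = v1 ∨ x = v2 ∨ x = v3 := by
    intro x hx
    by_contra hcon
    push_neg at hcon
    rw [Finsupp.add_apply, Finsupp.add_apply, Finsupp.single_eq_of_ne' (Ne.symm hcon.1),
      Finsupp.single_eq_of_ne' (Ne.symm hcon.2.1), Finsupp.single_eq_of_ne' (Ne.symm hcon.2.2)] at hx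
    omega
  have hane : a ≠ b := by
    intro hab
    have h2 := h a
    rw [Finsupp.add_apply, Finsupp.single_eq_same, hab, Finsupp.single_eq_same] at h2
    have := hle1 b
    omega
  have haa : 1 ≤ ((Finsupp.single v1 1 + Finsupp.single v2 1 + Finsupp.single v3 1 : σ →₀ ℕ)) a := by
    have h2 := h a
    rw [Finsupp.add_apply, Finsupp.single_eq_same] at h2
    omega
  have hbb : 1 ≤ ((Finsupp.single v1 1 + Finsupp.single v2 1 + Finsupp.single v3 1 : σ →₀ ℕ)) b := by
    have h2 := h b
    rw [Finsupp.add_apply, Finsupp.single_eq_same] at h2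
    omega
  exact ⟨hane, hmem a haa, hmem b hbb⟩

/-- For odd `d = 2k+1 ≥ 5` and `0 ≤ δ ≤ k−1`, the cubic binomial
`w_{(0,0,0)} w_{(2,0,d)} w_{(1,0,δ)} − w_{(1,0,k)}² w_{(1,0,δ+1)}` lies in `ker ψ`
but not in the ideal generated by the quadratic binomials; in particular for odd
`d` the ideal of quadratic binomials is strictly contained in `ker ψ`. -/
theorem stmt9 (K : Type*) [Field K] (d k δ : ℕ)
    (hdk : d = 2 * k + 1) (hd : 5 ≤ d) (hδ : δ + 1 ≤ k) :
    ∀ B : MvPolynomial ↥(Wset d) K,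
      B = X ⟨((0:ℤ),0,0), by simp only [Wset, Set.mem_setOf_eq]; omega⟩ *
          X ⟨((2:ℤ),0,(d:ℤ)), by simp only [Wset, Set.mem_setOf_eq]; omega⟩ *
          X ⟨((1:ℤ),0,(δ:ℤ)), by simp only [Wset, Set.mem_setOf_eq]; omega⟩ -
          X ⟨((1:ℤ),0,(k:ℤ)), by simp only [Wset, Set.mem_setOf_eq]; omega⟩ ^ 2 *
          X ⟨((1:ℤ),0,(δ:ℤ)+1), by simp only [Wset, Set.mem_setOf_eq]; omega⟩ →
      psi d K B = 0 ∧
      B ∉ Ideal.span {f : MvPolynomial ↥(Wset d) K |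
        ∃ a b c e : ↥(Wset d), a.val + b.val = c.val + e.val ∧
          f = X a * X b - X c * X e} := by
  intro B hB
  constructor
  · -- ψ B = 0
    rw [hB, map_sub, sub_eq_zero, map_mul, map_mul, map_mul, map_pow]
    simp only [psi, aeval_X]
    rw [show ((0:ℤ) + 2*0 + (1-0)*(d:ℤ)).toNat = d by omega,
        show ((0:ℤ)*(d:ℤ) - 2*0 - 3*0).toNat = 0 by omega,
        show ((0:ℤ)).toNat = 0 from rfl,
        show ((d:ℤ) + 2*0 + (1-2)*(d:ℤ)).toNat = 0 by omega,
        show ((2:ℤ)*(d:ℤ) - 2*(d:ℤ) - 3*0).toNat = 0 by omega,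
        show ((d:ℤ)).toNat = d by omega,
        show ((δ:ℤ) + 2*0 + (1-1)*(d:ℤ)).toNat = δ by omega,
        show ((1:ℤ)*(d:ℤ) - 2*(δ:ℤ) - 3*0).toNat = d - 2*δ by omega,
        show ((δ:ℤ)).toNat = δ by omega,
        show ((k:ℤ) + 2*0 + (1-1)*(d:ℤ)).toNat = k by omega,
        show ((1:ℤ)*(d:ℤ) - 2*(k:ℤ) - 3*0).toNat = 1 by omega,
        show ((k:ℤ)).toNat = k by omega,
        show ((δ:ℤ)+1 + 2*0 + (1-1)*(d:ℤ)).toNat = δ+1 by omega,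
        show ((1:ℤ)*(d:ℤ) - 2*((δ:ℤ)+1) - 3*0).toNat = d - 2*δ - 2 by omega,
        show ((δ:ℤ)+1).toNat = δ+1 by omega]
    simp only [pow_zero, mul_one, one_mul]
    rw [mul_pow, mul_pow]
    rw [← pow_mul, ← pow_mul, ← pow_mul]
    rw [show X (0:Fin 4) ^ d * X 2 ^ d * ((X 0:MvPolynomial (Fin 4) K) ^ δ * X 1 ^ (d - 2 * δ) * X 2 ^ δ)
        = X 0 ^ (d+δ) * X 1 ^ (d - 2*δ) * X 2 ^ (d+δ) by rw [pow_add, pow_add]; ring,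
       show (X (0:Fin 4)) ^ (k*2) * X 1 ^ (1*2) * X 2 ^ (k*2) *
          ((X 0:MvPolynomial (Fin 4) K) ^ (δ+1) * X 1 ^ (d - 2 * δ - 2) * X 2 ^ (δ+1))
        = X 0 ^ (k*2+(δ+1)) * X 1 ^ (1*2+(d-2*δ-2)) * X 2 ^ (k*2+(δ+1)) by
          rw [pow_add, pow_add, pow_add]; ring]
    rw [show k*2+(δ+1) = d+δ by omega, show 1*2+(d-2*δ-2) = d-2*δ by omega]
  · -- not in the quadratic binomial ideal
    intro hmem
    have pv1 : (((0:ℤ),0,0) : ℤ×ℤ×ℤ) ∈ Wset d := by simp only [Wset, Set.mem_setOf_eq]; omega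
    have pv2 : (((2:ℤ),0,(d:ℤ)) : ℤ×ℤ×ℤ) ∈ Wset d := by simp only [Wset, Set.mem_setOf_eq]; omega
    have pv3 : (((1:ℤ),0,(δ:ℤ)) : ℤ×ℤ×ℤ) ∈ Wset d := by simp only [Wset, Set.mem_setOf_eq]; omega
    have pu1 : (((1:ℤ),0,(k:ℤ)) : ℤ×ℤ×ℤ) ∈ Wset d := by simp only [Wset, Set.mem_setOf_eq]; omega
    have pu3 : (((1:ℤ),0,(δ:ℤ)+1) : ℤ×ℤ×ℤ) ∈ Wset d := by
      simp only [Wset, Set.mem_setOf_eq]; omega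
    set V1 : ↥(Wset d) := ⟨((0:ℤ),0,0), pv1⟩ with hV1
    set V2 : ↥(Wset d) := ⟨((2:ℤ),0,(d:ℤ)), pv2⟩ with hV2
    set V3 : ↥(Wset d) := ⟨((1:ℤ),0,(δ:ℤ)), pv3⟩ with hV3
    set U1 : ↥(Wset d) := ⟨((1:ℤ),0,(k:ℤ)), pu1⟩ with hU1
    set U3 : ↥(Wset d) := ⟨((1:ℤ),0,(δ:ℤ)+1), pu3⟩ with hU3
    have h12 : V1 ≠ V2 := by
      intro h; have := congrArg (fun x => x.val.1) h; simp [hV1, hV2] at this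
    have h13 : V1 ≠ V3 := by
      intro h; have := congrArg (fun x => x.val.1) h; simp [hV1, hV3] at this
    have h23 : V2 ≠ V3 := by
      intro h; have := congrArg (fun x => x.val.1) h; simp [hV2, hV3] at this
    have hu1v1 : U1 ≠ V1 := by
      intro h; have := congrArg (fun x => x.val.1) h; simp [hU1, hV1] at this
    have hu3v1 : U3 ≠ V1 := by
      intro h; have := congrArg (fun x => x.val.1) h; simp [hU3, hV1] at this
    set m1 : ↥(Wset d) →₀ ℕ :=
      Finsupp.single V1 1 + Finsupp.single V2 1 + Finsupp.single V3 1 with hm1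
    -- generic monomial rewrites
    have hXX : ∀ s t : ↥(Wset d), (X s * X t : MvPolynomial ↥(Wset d) K)
        = monomial (Finsupp.single s 1 + Finsupp.single t 1) 1 := by
      intro s t
      rw [show (X s : MvPolynomial ↥(Wset d) K) = monomial (Finsupp.single s 1) 1 from rfl,
        show (X t : MvPolynomial ↥(Wset d) K) = monomial (Finsupp.single t 1) 1 from rfl,
        monomial_mul, one_mul]
    have hXXX : ∀ s t u : ↥(Wset d), (X s * X t * X u : MvPolynomial ↥(Wset d) K)
        = monomial (Finsupp.single s 1 + Finsupp.single t 1 + Finsupp.single u 1) 1 := by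
      intro s t u
      rw [hXX s t, show (X u : MvPolynomial ↥(Wset d) K) = monomial (Finsupp.single u 1) 1 from rfl,
        monomial_mul, one_mul]
    have hXsq : ∀ s t : ↥(Wset d), (X s ^ 2 * X t : MvPolynomial ↥(Wset d) K)
        = monomial (Finsupp.single s 2 + Finsupp.single t 1) 1 := by
      intro s t
      rw [X_pow_eq_monomial,
        show (X t : MvPolynomial ↥(Wset d) K) = monomial (Finsupp.single t 1) 1 from rfl,
        monomial_mul, one_mul]
    -- coeff of m1 in B is 1
    have hcoeff : coeff m1 B = 1 := by
      rw [hB, hXXX, hXsq, coeff_sub, coeff_monomial, coeff_monomial, if_pos rfl, if_neg, sub_zero]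
      intro h
      have := DFunLike.congr_fun h V1
      rw [hm1] at this
      simp only [Finsupp.add_apply, Finsupp.single_apply] at this
      rw [if_pos trivial, if_neg (Ne.symm h12), if_neg (Ne.symm h13),
        if_neg (fun hh : U3 = V1 => hu3v1 hh),
        if_neg (fun hh : U1 = V1 => hu1v1 hh)] at this
      omega
    -- coeff of m1 in any element of the ideal is 0
    have hzero : ∀ r : MvPolynomial ↥(Wset d) K, coeff m1 (r * B) = 0 := by
      refine Submodule.span_induction
        (p := fun q _ => ∀ r : MvPolynomial ↥(Wset d) K, coeff m1 (r * q) = 0)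
        ?_ ?_ ?_ ?_ hmem
      · rintro f ⟨a, b, c, e, hsum, rfl⟩ r
        rw [mul_sub, coeff_sub, hXX a b, hXX c e, coeff_mul_monomial', coeff_mul_monomial']
        by_cases hab : Finsupp.single a 1 + Finsupp.single b 1 ≤ m1
        · obtain ⟨hne', hA', hB'⟩ := div39 h12 h13 h23 (hm1 ▸ hab)
          have hA'' : a.val = ((0:ℤ),0,0) ∨ a.val = ((2:ℤ),0,(d:ℤ)) ∨ a.val = ((1:ℤ),0,(δ:ℤ)) := by
            rcases hA' with rfl|rfl|rfl
            · exact Or.inl rfl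
            · exact Or.inr (Or.inl rfl)
            · exact Or.inr (Or.inr rfl)
          have hB'' : b.val = ((0:ℤ),0,0) ∨ b.val = ((2:ℤ),0,(d:ℤ)) ∨ b.val = ((1:ℤ),0,(δ:ℤ)) := by
            rcases hB' with rfl|rfl|rfl
            · exact Or.inl rfl
            · exact Or.inr (Or.inl rfl)
            · exact Or.inr (Or.inr rfl)
          rcases key9 d k δ hdk hd hδ a.2 b.2 c.2 e.2 hA'' hB''
              (fun h => hne' (Subtype.ext h)) hsum with ⟨h1, h2⟩ | ⟨h1, h2⟩
          · rw [show c = a from Subtype.ext h1, show e = b from Subtype.ext h2]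
            exact sub_self _
          · rw [show c = b from Subtype.ext h1, show e = a from Subtype.ext h2,
              add_comm (Finsupp.single b 1) (Finsupp.single a 1)]
            exact sub_self _
        · by_cases hce : Finsupp.single c 1 + Finsupp.single e 1 ≤ m1
          · obtain ⟨hne', hA', hB'⟩ := div39 h12 h13 h23 (hm1 ▸ hce)
            have hA'' : c.val = ((0:ℤ),0,0) ∨ c.val = ((2:ℤ),0,(d:ℤ)) ∨
                c.val = ((1:ℤ),0,(δ:ℤ)) := by
              rcases hA' with rfl|rfl|rfl
              · exact Or.inl rfl
              · exact Or.inr (Or.inl rfl)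
              · exact Or.inr (Or.inr rfl)
            have hB'' : e.val = ((0:ℤ),0,0) ∨ e.val = ((2:ℤ),0,(d:ℤ)) ∨
                e.val = ((1:ℤ),0,(δ:ℤ)) := by
              rcases hB' with rfl|rfl|rfl
              · exact Or.inl rfl
              · exact Or.inr (Or.inl rfl)
              · exact Or.inr (Or.inr rfl)
            rcases key9 d k δ hdk hd hδ c.2 e.2 a.2 b.2 hA'' hB''
                (fun h => hne' (Subtype.ext h)) hsum.symm with ⟨h1, h2⟩ | ⟨h1, h2⟩
            · rw [show a = c from Subtype.ext h1, show b = e from Subtype.ext h2]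
              exact sub_self _
            · rw [show a = e from Subtype.ext h1, show b = c from Subtype.ext h2,
                add_comm (Finsupp.single e 1) (Finsupp.single c 1)]
              exact sub_self _
          · rw [if_neg hab, if_neg hce, sub_self]
      · intro r
        rw [mul_zero, coeff_zero]
      · intro x y _ _ ihx ihy r
        rw [mul_add, coeff_add, ihx, ihy, add_zero]
      · intro a x _ ih r
        rw [smul_eq_mul, ← mul_assoc, ih]
    have := hzero 1
    rw [one_mul, hcoeff] at this
    exact one_ne_zero this
end

section
/- Let d ≥ 4 be an integer and (1,γ,δ) ∈ W_d. There exist (2,γ₁,δ₁), (2,γ₂,δ₂) ∈ W_d with γ₁ + γ₂ = γ + d and δ₁ + δ₂ = δ if and only if it is not the case that ρ ≠ 0 and (γ,δ) = (k', ⌊ρ/2⌋), and it is not the case that d is odd and γ = δ = 0. -/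
/-- Write `d = 2k + ε` (`ε ∈ {0,1}`) and `d = 3k' + ρ` (`ρ ∈ {0,1,2}`). For
`(1,γ,δ) ∈ W_d`, there are `(2,γ₁,δ₁), (2,γ₂,δ₂) ∈ W_d` with `γ₁+γ₂ = γ+d` and
`δ₁+δ₂ = δ` iff it is not the case that `ρ ≠ 0` and `(γ,δ) = (k', ⌊ρ/2⌋)`, and it
is not the case that `d` is odd and `γ = δ = 0`. -/
theorem stmt10 (d k k' ε ρ : ℕ) (hd : 4 ≤ d)
    (hkε : d = 2 * k + ε) (hε : ε ≤ 1) (hkρ : d = 3 * k' + ρ) (hρ : ρ ≤ 2)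
    (γ δ : ℤ) (hmem : ((1:ℤ), γ, δ) ∈ Wset d) :
    (∃ γ₁ δ₁ γ₂ δ₂ : ℤ, ((2:ℤ), γ₁, δ₁) ∈ Wset d ∧ ((2:ℤ), γ₂, δ₂) ∈ Wset d ∧
        γ₁ + γ₂ = γ + (d:ℤ) ∧ δ₁ + δ₂ = δ) ↔
      (¬ (ρ ≠ 0 ∧ γ = (k' : ℤ) ∧ δ = ((ρ / 2 : ℕ) : ℤ)) ∧
       ¬ (Odd d ∧ γ = 0 ∧ δ = 0)) := by
  simp only [Wset, Set.mem_setOf_eq] at hmem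
  constructor
  · rintro ⟨γ₁, δ₁, γ₂, δ₂, h1, h2, h3, h4⟩
    simp only [Wset, Set.mem_setOf_eq] at h1 h2
    constructor
    · rintro ⟨hρ0, hγ, hδ⟩
      rcases (by omega : ρ = 1 ∨ ρ = 2) with h | h <;> subst h <;>
        simp at hδ <;> omega
    · rintro ⟨⟨m, hm⟩, hγ, hδ⟩
      omega
  · rintro ⟨hA, hB⟩
    have hB' : ¬(ε = 1 ∧ γ = 0 ∧ δ = 0) := by
      rintro ⟨h1, h2, h3⟩; exact hB ⟨⟨(k : ℤ).toNat, by omega⟩, h2, h3⟩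
    simp only [Wset, Set.mem_setOf_eq]
    obtain ⟨-, -, hg, hde, -, hS⟩ := hmem
    obtain ⟨q, hq⟩ : ∃ q : ℤ, 3*q ≤ (d:ℤ) - δ + 2 ∧ (d:ℤ) - δ + 2 < 3*q + 3 :=
      ⟨((d:ℤ) - δ + 2) / 3, by omega⟩
    obtain ⟨m, hm⟩ : ∃ m : ℤ, 2*m ≤ γ + d ∧ γ + d < 2*m + 2 :=
      ⟨(γ + d) / 2, by omega⟩
    obtain ⟨n, hn⟩ : ∃ n : ℤ, 2*n ≤ δ + 1 ∧ δ + 1 < 2*n + 2 :=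
      ⟨(δ + 1) / 2, by omega⟩
    have key :
        (0 ≤ γ + d - 2*q ∧ 0 ≤ δ - ((d:ℤ) - 3*q) ∧
          (d:ℤ) ≤ (δ - ((d:ℤ) - 3*q)) + 2*(γ + d - 2*q) ∧
          2*(δ - ((d:ℤ) - 3*q)) + 3*(γ + d - 2*q) ≤ 2*d ∧
          0 ≤ 2*q ∧ 0 ≤ (d:ℤ) - 3*q ∧ (d:ℤ) ≤ ((d:ℤ) - 3*q) + 2*(2*q) ∧
          2*((d:ℤ) - 3*q) + 3*(2*q) ≤ 2*d) ∨
        (0 ≤ γ + d - ((k:ℤ) + ε) ∧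
          (d:ℤ) ≤ δ + 2*(γ + d - ((k:ℤ) + ε)) ∧
          2*δ + 3*(γ + d - ((k:ℤ) + ε)) ≤ 2*d ∧
          (d:ℤ) ≤ 2*((k:ℤ) + ε) ∧ 3*((k:ℤ) + ε) ≤ 2*d) ∨
        (0 ≤ γ + d - m ∧ 0 ≤ δ - n ∧
          (d:ℤ) ≤ (δ - n) + 2*(γ + d - m) ∧
          2*(δ - n) + 3*(γ + d - m) ≤ 2*d ∧
          0 ≤ m ∧ 0 ≤ n ∧ (d:ℤ) ≤ n + 2*m ∧ 2*n + 3*m ≤ 2*d) := by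
      rcases (by omega : ρ = 0 ∨ ρ = 1 ∨ ρ = 2) with h | h | h <;> subst h <;>
        simp at hA <;> omega
    rcases key with h | h | h
    · exact ⟨γ + d - 2*q, δ - ((d:ℤ) - 3*q), 2*q, (d:ℤ) - 3*q,
        ⟨by norm_num, by norm_num, by omega, by omega, by omega, by omega⟩,
        ⟨by norm_num, by norm_num, by omega, by omega, by omega, by omega⟩,
        by ring, by ring⟩
    · exact ⟨γ + d - ((k:ℤ) + ε), δ, (k:ℤ) + ε, 0,
        ⟨by norm_num, by norm_num, by omega, by omega, by omega, by omega⟩,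
        ⟨by norm_num, by norm_num, by omega, by omega, by omega, by omega⟩,
        by ring, by ring⟩
    · exact ⟨γ + d - m, δ - n, m, n,
        ⟨by norm_num, by norm_num, by omega, by omega, by omega, by omega⟩,
        ⟨by norm_num, by norm_num, by omega, by omega, by omega, by omega⟩,
        by ring, by ring⟩
end

section
/- Let d ≥ 4 be an integer. For every (1,γ,δ) ∈ W_d there exist n ∈ {2,3} and elements a₂,…,a_n, b₁,…,b_n ∈ W_d such that (1,γ,δ) + a₂ + ⋯ + a_n = b₁ + ⋯ + b_n componentwise in ℤ³, each a_i is greater than or equal to (1,γ,δ) and each b_j is strictly greater than (1,γ,δ) in the lexicographic order on ℤ³, and the sets {(1,γ,δ), a₂, …, a_n} and {b₁, …, b_n} are disjoint. (Every variable w_{(1,γ,δ)} admits a special 2-binomial or 3-binomial.) -/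
/-- Strict lexicographic order on `ℤ³`. -/
def lexLt (x y : ℤ × ℤ × ℤ) : Prop :=
  x.1 < y.1 ∨ (x.1 = y.1 ∧ (x.2.1 < y.2.1 ∨ (x.2.1 = y.2.1 ∧ x.2.2 < y.2.2)))

/-- Weak lexicographic order on `ℤ³`. -/
def lexLe (x y : ℤ × ℤ × ℤ) : Prop := lexLt x y ∨ x = y

lemma aux2 {d : ℕ} {w a p q : ℤ × ℤ × ℤ}
    (ha : a ∈ Wset d) (hp : p ∈ Wset d) (hq : q ∈ Wset d)
    (hsum : w + a = p + q)
    (hla : lexLe w a) (hlp : lexLt w p) (hlq : lexLt w q)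
    (h1 : w ≠ p) (h2 : w ≠ q) (h3 : a ≠ p) (h4 : a ≠ q) :
    ∃ n : ℕ, (n = 2 ∨ n = 3) ∧
      ∃ (A : Fin (n - 1) → ℤ × ℤ × ℤ) (B : Fin n → ℤ × ℤ × ℤ),
        (∀ i, A i ∈ Wset d) ∧ (∀ j, B j ∈ Wset d) ∧
        (w + ∑ i, A i = ∑ j, B j) ∧
        (∀ i, lexLe w (A i)) ∧
        (∀ j, lexLt w (B j)) ∧
        ((({w} : Set (ℤ × ℤ × ℤ)) ∪ Set.range A) ∩ Set.range B = ∅) := by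
  refine ⟨2, Or.inl rfl, ![a], ![p, q], ?_, ?_, ?_, ?_, ?_, ?_⟩
  · intro i; fin_cases i <;> simpa
  · intro j; fin_cases j <;> simpa
  · simpa [Fin.sum_univ_two] using hsum
  · intro i; fin_cases i <;> simpa
  · intro j; fin_cases j <;> simpa
  · apply Set.eq_empty_iff_forall_notMem.mpr
    rintro x ⟨hx1, j, rfl⟩
    have hx1' : (![p, q] j = w) ∨ (![p, q] j = a) := by
      rcases hx1 with h | ⟨i, hi⟩
      · exact Or.inl h
      · fin_cases i; simp at hi; exact Or.inr hi.symm
    fin_cases j <;> simp at hx1' <;>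
      rcases hx1' with h | h
    · exact h1 h.symm
    · exact h3 h.symm
    · exact h2 h.symm
    · exact h4 h.symm

lemma aux3 {d : ℕ} {w a₂ a₃ p q r : ℤ × ℤ × ℤ}
    (ha2 : a₂ ∈ Wset d) (ha3 : a₃ ∈ Wset d)
    (hp : p ∈ Wset d) (hq : q ∈ Wset d) (hr : r ∈ Wset d)
    (hsum : w + (a₂ + a₃) = p + q + r)
    (hla2 : lexLe w a₂) (hla3 : lexLe w a₃)
    (hlp : lexLt w p) (hlq : lexLt w q) (hlr : lexLt w r)
    (h1 : w ≠ p) (h2 : w ≠ q) (h3 : w ≠ r)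
    (h4 : a₂ ≠ p) (h5 : a₂ ≠ q) (h6 : a₂ ≠ r)
    (h7 : a₃ ≠ p) (h8 : a₃ ≠ q) (h9 : a₃ ≠ r) :
    ∃ n : ℕ, (n = 2 ∨ n = 3) ∧
      ∃ (A : Fin (n - 1) → ℤ × ℤ × ℤ) (B : Fin n → ℤ × ℤ × ℤ),
        (∀ i, A i ∈ Wset d) ∧ (∀ j, B j ∈ Wset d) ∧
        (w + ∑ i, A i = ∑ j, B j) ∧
        (∀ i, lexLe w (A i)) ∧
        (∀ j, lexLt w (B j)) ∧
        ((({w} : Set (ℤ × ℤ × ℤ)) ∪ Set.range A) ∩ Set.range B = ∅) := by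
  refine ⟨3, Or.inr rfl, ![a₂, a₃], ![p, q, r], ?_, ?_, ?_, ?_, ?_, ?_⟩
  · intro i; fin_cases i <;> simpa
  · intro j; fin_cases j <;> simpa
  · simpa [Fin.sum_univ_two, Fin.sum_univ_three, add_assoc] using hsum
  · intro i; fin_cases i <;> simpa
  · intro j; fin_cases j <;> simpa
  · apply Set.eq_empty_iff_forall_notMem.mpr
    rintro x ⟨hx1, j, rfl⟩
    have hx1' : (![p, q, r] j = w) ∨ (![p, q, r] j = a₂) ∨ (![p, q, r] j = a₃) := by
      rcases hx1 with h | ⟨i, hi⟩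
      · exact Or.inl h
      · fin_cases i <;> simp at hi
        · exact Or.inr (Or.inl hi.symm)
        · exact Or.inr (Or.inr hi.symm)
    fin_cases j <;> simp at hx1' <;>
      rcases hx1' with h | h | h
    · exact h1 h.symm
    · exact h4 h.symm
    · exact h7 h.symm
    · exact h2 h.symm
    · exact h5 h.symm
    · exact h8 h.symm
    · exact h3 h.symm
    · exact h6 h.symm
    · exact h9 h.symm

/-- For `d ≥ 4`, every variable `w_{(1,γ,δ)}` admits a special 2-binomial or
3-binomial: there are `n ∈ {2,3}` and `a₂,…,a_n, b₁,…,b_n ∈ W_d` with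
`(1,γ,δ) + a₂ + ⋯ + a_n = b₁ + ⋯ + b_n`, each `a_i ≥ (1,γ,δ)` and each
`b_j > (1,γ,δ)` lexicographically, and `{(1,γ,δ), a₂, …, a_n} ∩ {b₁, …, b_n} = ∅`. -/
theorem stmt11 (d : ℕ) (hd : 4 ≤ d) (γ δ : ℤ) (hmem : ((1:ℤ), γ, δ) ∈ Wset d) :
    ∃ n : ℕ, (n = 2 ∨ n = 3) ∧
      ∃ (a : Fin (n - 1) → ℤ × ℤ × ℤ) (b : Fin n → ℤ × ℤ × ℤ),
        (∀ i, a i ∈ Wset d) ∧ (∀ j, b j ∈ Wset d) ∧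
        (((1:ℤ), γ, δ) + ∑ i, a i = ∑ j, b j) ∧
        (∀ i, lexLe ((1:ℤ), γ, δ) (a i)) ∧
        (∀ j, lexLt ((1:ℤ), γ, δ) (b j)) ∧
        ((({((1:ℤ), γ, δ)} : Set (ℤ × ℤ × ℤ)) ∪ Set.range a) ∩ Set.range b = ∅) := by
  simp only [Wset, Set.mem_setOf_eq] at hmem
  obtain ⟨-, -, hg, he, -, hu⟩ := hmem
  have hd' : (4:ℤ) ≤ (d:ℤ) := by exact_mod_cast hd
  by_cases hc : 2*δ + 3*γ + 4 ≤ (d:ℤ)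
  · -- r = 1 construction
    refine aux2 (a := ((1:ℤ), γ, δ+2)) (p := ((1:ℤ), γ, δ+1)) (q := ((1:ℤ), γ, δ+1))
      ?_ ?_ ?_ ?_ ?_ ?_ ?_ ?_ ?_ ?_ ?_
    · simp only [Wset, Set.mem_setOf_eq]; omega
    · simp only [Wset, Set.mem_setOf_eq]; omega
    · simp only [Wset, Set.mem_setOf_eq]; omega
    · simp only [Prod.mk_add_mk, Prod.mk.injEq, true_and, and_true]; omega
    · left; right; exact ⟨rfl, Or.inr ⟨rfl, show δ < δ + 2 by omega⟩⟩
    · right; exact ⟨rfl, Or.inr ⟨rfl, show δ < δ + 1 by omega⟩⟩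
    · right; exact ⟨rfl, Or.inr ⟨rfl, show δ < δ + 1 by omega⟩⟩
    · intro h; rw [Prod.mk.injEq, Prod.mk.injEq] at h; omega
    · intro h; rw [Prod.mk.injEq, Prod.mk.injEq] at h; omega
    · intro h; rw [Prod.mk.injEq, Prod.mk.injEq] at h; omega
    · intro h; rw [Prod.mk.injEq, Prod.mk.injEq] at h; omega
  · push_neg at hc
    by_cases hA : δ = 0 ∧ (d:ℤ) = 3*γ + 1
    · -- family A : n = 3
      obtain ⟨h0, hd3⟩ := hA
      refine aux3 (a₂ := ((3:ℤ), (d:ℤ), 0)) (a₃ := ((2:ℤ), 0, (d:ℤ)))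
        (p := ((2:ℤ), 1, (d:ℤ)-2)) (q := ((2:ℤ), 2*γ, 1)) (r := ((2:ℤ), 2*γ, 1))
        ?_ ?_ ?_ ?_ ?_ ?_ ?_ ?_ ?_ ?_ ?_ ?_ ?_ ?_ ?_ ?_ ?_ ?_ ?_ ?_
      · simp only [Wset, Set.mem_setOf_eq]; omega
      · simp only [Wset, Set.mem_setOf_eq]; omega
      · simp only [Wset, Set.mem_setOf_eq]; omega
      · simp only [Wset, Set.mem_setOf_eq]; omega
      · simp only [Wset, Set.mem_setOf_eq]; omega
      · simp only [Prod.mk_add_mk, Prod.mk.injEq, true_and, and_true]; omega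
      · left; left; show (1:ℤ) < 3; norm_num
      · left; left; show (1:ℤ) < 2; norm_num
      · left; show (1:ℤ) < 2; norm_num
      · left; show (1:ℤ) < 2; norm_num
      · left; show (1:ℤ) < 2; norm_num
      · intro h; rw [Prod.mk.injEq, Prod.mk.injEq] at h; omega
      · intro h; rw [Prod.mk.injEq, Prod.mk.injEq] at h; omega
      · intro h; rw [Prod.mk.injEq, Prod.mk.injEq] at h; omega
      · intro h; rw [Prod.mk.injEq, Prod.mk.injEq] at h; omega
      · intro h; rw [Prod.mk.injEq, Prod.mk.injEq] at h; omega
      · intro h; rw [Prod.mk.injEq, Prod.mk.injEq] at h; omega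
      · intro h; rw [Prod.mk.injEq, Prod.mk.injEq] at h; omega
      · intro h; rw [Prod.mk.injEq, Prod.mk.injEq] at h; omega
      · intro h; rw [Prod.mk.injEq, Prod.mk.injEq] at h; omega
    · by_cases hB : δ = 1 ∧ (d:ℤ) = 3*γ + 2
      · -- family B : n = 3
        obtain ⟨h0, hd3⟩ := hB
        refine aux3 (a₂ := ((3:ℤ), (d:ℤ), 0)) (a₃ := ((2:ℤ), 0, (d:ℤ)))
          (p := ((2:ℤ), 2, (d:ℤ)-3)) (q := ((2:ℤ), 2*γ, 2)) (r := ((2:ℤ), 2*γ, 2))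
          ?_ ?_ ?_ ?_ ?_ ?_ ?_ ?_ ?_ ?_ ?_ ?_ ?_ ?_ ?_ ?_ ?_ ?_ ?_ ?_
        · simp only [Wset, Set.mem_setOf_eq]; omega
        · simp only [Wset, Set.mem_setOf_eq]; omega
        · simp only [Wset, Set.mem_setOf_eq]; omega
        · simp only [Wset, Set.mem_setOf_eq]; omega
        · simp only [Wset, Set.mem_setOf_eq]; omega
        · simp only [Prod.mk_add_mk, Prod.mk.injEq, true_and, and_true]; omega
        · left; left; show (1:ℤ) < 3; norm_num
        · left; left; show (1:ℤ) < 2; norm_num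
        · left; show (1:ℤ) < 2; norm_num
        · left; show (1:ℤ) < 2; norm_num
        · left; show (1:ℤ) < 2; norm_num
        · intro h; rw [Prod.mk.injEq, Prod.mk.injEq] at h; omega
        · intro h; rw [Prod.mk.injEq, Prod.mk.injEq] at h; omega
        · intro h; rw [Prod.mk.injEq, Prod.mk.injEq] at h; omega
        · intro h; rw [Prod.mk.injEq, Prod.mk.injEq] at h; omega
        · intro h; rw [Prod.mk.injEq, Prod.mk.injEq] at h; omega
        · intro h; rw [Prod.mk.injEq, Prod.mk.injEq] at h; omega
        · intro h; rw [Prod.mk.injEq, Prod.mk.injEq] at h; omega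
        · intro h; rw [Prod.mk.injEq, Prod.mk.injEq] at h; omega
        · intro h; rw [Prod.mk.injEq, Prod.mk.injEq] at h; omega
      · -- generic n = 2 with a = (3,d,0)
        have hA' : ¬(δ = 0 ∧ (d:ℤ) = 3*γ + 1) := hA
        have hB' : ¬(δ = 1 ∧ (d:ℤ) = 3*γ + 2) := hB
        have key : ∃ g1 e1 : ℤ,
            0 ≤ g1 ∧ 0 ≤ e1 ∧ e1 ≤ δ ∧ g1 ≤ γ + (d:ℤ) ∧
            (d:ℤ) ≤ e1 + 2*g1 ∧ 2*e1 + 3*g1 ≤ 2*(d:ℤ) ∧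
            (d:ℤ) ≤ (δ - e1) + 2*(γ + (d:ℤ) - g1) ∧
            2*(δ - e1) + 3*(γ + (d:ℤ) - g1) ≤ 2*(d:ℤ) := by
          have hA'' : δ = 0 → (d:ℤ) ≠ 3*γ + 1 := fun h1 h2 => hA' ⟨h1, h2⟩
          have hB'' : δ = 1 → (d:ℤ) ≠ 3*γ + 2 := fun h1 h2 => hB' ⟨h1, h2⟩
          obtain ⟨m, hm⟩ := Int.even_or_odd' δ
          obtain ⟨l, hl⟩ := Int.even_or_odd' (γ + (d:ℤ))
          rcases hm with hm | hm <;> rcases hl with hl | hl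
          · exact ⟨l, m, by omega, by omega, by omega, by omega, by omega, by omega,
              by omega, by omega⟩
          · by_cases h0 : δ = 0
            · exact ⟨l+1, 0, by omega, by omega, by omega, by omega, by omega, by omega,
                by omega, by omega⟩
            · exact ⟨l, m+1, by omega, by omega, by omega, by omega, by omega, by omega,
                by omega, by omega⟩
          · by_cases hc2 : 2*δ + 3*γ + 2 ≤ (d:ℤ)
            · exact ⟨l, m+1, by omega, by omega, by omega, by omega, by omega, by omega,
                by omega, by omega⟩
            · exact ⟨l+1, m-1, by omega, by omega, by omega, by omega, by omega, by omega,
                by omega, by omega⟩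
          · exact ⟨l+1, m, by omega, by omega, by omega, by omega, by omega, by omega,
              by omega, by omega⟩
        obtain ⟨g1, e1, k1, k2, k3, k4, k5, k6, k7, k8⟩ := key
        refine aux2 (a := ((3:ℤ), (d:ℤ), 0)) (p := ((2:ℤ), g1, e1))
          (q := ((2:ℤ), γ + (d:ℤ) - g1, δ - e1)) ?_ ?_ ?_ ?_ ?_ ?_ ?_ ?_ ?_ ?_ ?_
        · simp only [Wset, Set.mem_setOf_eq]; omega
        · simp only [Wset, Set.mem_setOf_eq]; omega
        · simp only [Wset, Set.mem_setOf_eq]; omega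
        · simp only [Prod.mk_add_mk, Prod.mk.injEq, true_and, and_true]; omega
        · left; left; show (1:ℤ) < 3; norm_num
        · left; show (1:ℤ) < 2; norm_num
        · left; show (1:ℤ) < 2; norm_num
        · intro h; rw [Prod.mk.injEq, Prod.mk.injEq] at h; omega
        · intro h; rw [Prod.mk.injEq, Prod.mk.injEq] at h; omega
        · intro h; rw [Prod.mk.injEq, Prod.mk.injEq] at h; omega
        · intro h; rw [Prod.mk.injEq, Prod.mk.injEq] at h; omega
end

section
/- Let d ≥ 4 be an integer. For every (2,γ,δ) ∈ W_d that is not in the exceptional set E_ρ — where E₀ = {(2,2k'−1,0), (2,2k'−1,1), (2,2k',0)} if ρ = 0, E₁ = {(2,2k'−1,2), (2,2k',0), (2,2k',1)} if ρ = 1, and E₂ = {(2,2k',1), (2,2k',2), (2,2k'+1,0)} if ρ = 2 — there exist n ∈ {2,3} and elements a₂,…,a_n, b₁,…,b_n ∈ W_d such that (2,γ,δ) + a₂ + ⋯ + a_n = b₁ + ⋯ + b_n componentwise in ℤ³, each a_i is greater than or equal to (2,γ,δ) and each b_j is strictly greater than (2,γ,δ) in the lexicographic order on ℤ³, and the sets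 {(2,γ,δ), a₂, …, a_n} and {b₁, …, b_n} are disjoint. -/
lemma memW (d : ℕ) (r g e : ℤ) (h1 : 0 ≤ r) (h2 : r ≤ 3) (h3 : 0 ≤ g) (h4 : 0 ≤ e)
    (h5 : 0 ≤ e + 2 * g + (1 - r) * (d : ℤ)) (h6 : 2 * e + 3 * g ≤ r * (d : ℤ)) :
    (r, g, e) ∈ Wset d := ⟨h1, h2, h3, h4, h5, h6⟩

lemma ltd {γ δ δ' : ℤ} (h : δ < δ') : lexLt (2, γ, δ) (2, γ, δ') :=
  Or.inr ⟨rfl, Or.inr ⟨rfl, h⟩⟩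

lemma ltg {γ γ' δ δ' : ℤ} (h : γ < γ') : lexLt (2, γ, δ) (2, γ', δ') :=
  Or.inr ⟨rfl, Or.inl h⟩

lemma neP {a b c a' b' c' : ℤ} (h : ¬(a = a' ∧ b = b' ∧ c = c')) :
    ((a, b, c) : ℤ × ℤ × ℤ) ≠ (a', b', c') :=
  fun he => h (by simpa [Prod.ext_iff] using he)

lemma bintwo (d : ℕ) (w a b1 b2 : ℤ × ℤ × ℤ)
    (ha : a ∈ Wset d) (hb1 : b1 ∈ Wset d) (hb2 : b2 ∈ Wset d)
    (hsum : w + a = b1 + b2)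
    (hA : lexLe w a) (h1 : lexLt w b1) (h2 : lexLt w b2)
    (d1 : b1 ≠ w) (d2 : b1 ≠ a) (d3 : b2 ≠ w) (d4 : b2 ≠ a) :
    ∃ n : ℕ, (n = 2 ∨ n = 3) ∧
      ∃ (A : Fin (n - 1) → ℤ × ℤ × ℤ) (B : Fin n → ℤ × ℤ × ℤ),
        (∀ i, A i ∈ Wset d) ∧ (∀ j, B j ∈ Wset d) ∧
        (w + ∑ i, A i = ∑ j, B j) ∧
        (∀ i, lexLe w (A i)) ∧ (∀ j, lexLt w (B j)) ∧
        ((({w} : Set (ℤ × ℤ × ℤ)) ∪ Set.range A) ∩ Set.range B = ∅) := by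
  refine ⟨2, Or.inl rfl, ![a], ![b1, b2], ?_, ?_, ?_, ?_, ?_, ?_⟩
  · intro i; fin_cases i <;> simpa
  · intro j; fin_cases j <;> simpa
  · simpa using hsum
  · intro i; fin_cases i; simpa
  · intro j; fin_cases j <;> simpa
  · apply Set.eq_empty_iff_forall_notMem.2
    rintro x ⟨hL, j, rfl⟩
    simp only [Set.mem_union, Set.mem_singleton_iff, Set.mem_range] at hL
    have hR : ![b1, b2] j = b1 ∨ ![b1, b2] j = b2 := by fin_cases j <;> simp
    rcases hL with h | ⟨i, hi⟩
    · rcases hR with h' | h' <;> rw [h'] at h <;> [exact d1 h; exact d3 h]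
    · fin_cases i
      simp only [Matrix.cons_val_zero] at hi
      rcases hR with h' | h' <;> rw [h'] at hi <;> [exact d2 hi.symm; exact d4 hi.symm]

lemma binthree (d : ℕ) (w a2 a3 b : ℤ × ℤ × ℤ)
    (ha2 : a2 ∈ Wset d) (ha3 : a3 ∈ Wset d) (hb : b ∈ Wset d)
    (hsum : w + (a2 + a3) = b + b + b)
    (hA2 : lexLe w a2) (hA3 : lexLe w a3) (hB : lexLt w b)
    (d1 : b ≠ w) (d2 : b ≠ a2) (d3 : b ≠ a3) :
    ∃ n : ℕ, (n = 2 ∨ n = 3) ∧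
      ∃ (A : Fin (n - 1) → ℤ × ℤ × ℤ) (B : Fin n → ℤ × ℤ × ℤ),
        (∀ i, A i ∈ Wset d) ∧ (∀ j, B j ∈ Wset d) ∧
        (w + ∑ i, A i = ∑ j, B j) ∧
        (∀ i, lexLe w (A i)) ∧ (∀ j, lexLt w (B j)) ∧
        ((({w} : Set (ℤ × ℤ × ℤ)) ∪ Set.range A) ∩ Set.range B = ∅) := by
  refine ⟨3, Or.inr rfl, ![a2, a3], ![b, b, b], ?_, ?_, ?_, ?_, ?_, ?_⟩
  · intro i; fin_cases i <;> simpa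
  · intro j; fin_cases j <;> simpa
  · simpa [Fin.sum_univ_three, add_assoc] using hsum
  · intro i; fin_cases i <;> simpa
  · intro j; fin_cases j <;> simpa
  · apply Set.eq_empty_iff_forall_notMem.2
    rintro x ⟨hL, j, rfl⟩
    simp only [Set.mem_union, Set.mem_singleton_iff, Set.mem_range] at hL
    have hR : ![b, b, b] j = b := by fin_cases j <;> simp
    rw [hR] at hL
    rcases hL with h | ⟨i, hi⟩
    · exact d1 h
    · fin_cases i <;>
        simp only [Matrix.cons_val_zero, Matrix.cons_val_one, Matrix.head_cons] at hi
      · exact d2 hi.symm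
      · exact d3 hi.symm

/-- Write `d = 2k + ε` and `d = 3k' + ρ`. Every variable `w_{(2,γ,δ)}` with
`(2,γ,δ)` outside the exceptional set `E_ρ` admits a special 2-binomial or
3-binomial. -/
theorem stmt12 (d k k' ε ρ : ℕ) (hd : 4 ≤ d)
    (hkε : d = 2 * k + ε) (hε : ε ≤ 1) (hkρ : d = 3 * k' + ρ) (hρ : ρ ≤ 2)
    (γ δ : ℤ) (hmem : ((2:ℤ), γ, δ) ∈ Wset d)
    (hexc0 : ¬ (ρ = 0 ∧ ((γ = 2 * (k':ℤ) - 1 ∧ δ = 0) ∨ (γ = 2 * (k':ℤ) - 1 ∧ δ = 1) ∨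
        (γ = 2 * (k':ℤ) ∧ δ = 0))))
    (hexc1 : ¬ (ρ = 1 ∧ ((γ = 2 * (k':ℤ) - 1 ∧ δ = 2) ∨ (γ = 2 * (k':ℤ) ∧ δ = 0) ∨
        (γ = 2 * (k':ℤ) ∧ δ = 1))))
    (hexc2 : ¬ (ρ = 2 ∧ ((γ = 2 * (k':ℤ) ∧ δ = 1) ∨ (γ = 2 * (k':ℤ) ∧ δ = 2) ∨
        (γ = 2 * (k':ℤ) + 1 ∧ δ = 0)))) :
    ∃ n : ℕ, (n = 2 ∨ n = 3) ∧
      ∃ (a : Fin (n - 1) → ℤ × ℤ × ℤ) (b : Fin n → ℤ × ℤ × ℤ),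
        (∀ i, a i ∈ Wset d) ∧ (∀ j, b j ∈ Wset d) ∧
        (((2:ℤ), γ, δ) + ∑ i, a i = ∑ j, b j) ∧
        (∀ i, lexLe ((2:ℤ), γ, δ) (a i)) ∧
        (∀ j, lexLt ((2:ℤ), γ, δ) (b j)) ∧
        ((({((2:ℤ), γ, δ)} : Set (ℤ × ℤ × ℤ)) ∪ Set.range a) ∩ Set.range b = ∅) := by
  obtain ⟨-, -, hγ, hδ, hlow, hup⟩ := hmem
  simp only at hγ hδ hlow hup
  by_cases hA : 2 * δ + 3 * γ ≤ 2 * (d:ℤ) - 4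
  · exact bintwo d _ (2, γ, δ + 2) (2, γ, δ + 1) (2, γ, δ + 1)
      (memW _ _ _ _ (by norm_num) (by norm_num) (by omega) (by omega) (by omega) (by omega))
      (memW _ _ _ _ (by norm_num) (by norm_num) (by omega) (by omega) (by omega) (by omega))
      (memW _ _ _ _ (by norm_num) (by norm_num) (by omega) (by omega) (by omega) (by omega))
      (by simp only [Prod.mk_add_mk, Prod.mk.injEq, true_and, and_true]; omega)
      (Or.inl (ltd (by omega))) (ltd (by omega)) (ltd (by omega))
      (neP (by omega)) (neP (by omega)) (neP (by omega)) (neP (by omega))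
  by_cases hB : 4 ≤ δ
  · exact bintwo d _ (2, γ + 2, δ - 4) (2, γ + 1, δ - 2) (2, γ + 1, δ - 2)
      (memW _ _ _ _ (by norm_num) (by norm_num) (by omega) (by omega) (by omega) (by omega))
      (memW _ _ _ _ (by norm_num) (by norm_num) (by omega) (by omega) (by omega) (by omega))
      (memW _ _ _ _ (by norm_num) (by norm_num) (by omega) (by omega) (by omega) (by omega))
      (by simp only [Prod.mk_add_mk, Prod.mk.injEq, true_and, and_true]; omega)
      (Or.inl (ltg (by omega))) (ltg (by omega)) (ltg (by omega))
      (neP (by omega)) (neP (by omega)) (neP (by omega)) (neP (by omega))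
  interval_cases ρ
  · -- ρ = 0
    have h1 : ¬(γ = 2 * (k':ℤ) - 1 ∧ δ = 0) := fun h => hexc0 ⟨rfl, Or.inl h⟩
    have h2 : ¬(γ = 2 * (k':ℤ) - 1 ∧ δ = 1) := fun h => hexc0 ⟨rfl, Or.inr (Or.inl h)⟩
    have h3 : ¬(γ = 2 * (k':ℤ) ∧ δ = 0) := fun h => hexc0 ⟨rfl, Or.inr (Or.inr h)⟩
    have hk' : 2 ≤ k' := by omega
    have hcase : (γ = 2 * (k':ℤ) - 2 ∧ δ = 2) ∨ (γ = 2 * (k':ℤ) - 3 ∧ δ = 3) ∨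
        (γ = 2 * (k':ℤ) - 2 ∧ δ = 3) := by omega
    rcases hcase with ⟨hg, he⟩ | ⟨hg, he⟩ | ⟨hg, he⟩ <;> subst hg <;> subst he
    · exact bintwo d _ (2, 2 * (k':ℤ) - 1, 1) (2, 2 * (k':ℤ) - 2, 3) (2, 2 * (k':ℤ) - 1, 0)
        (memW _ _ _ _ (by norm_num) (by norm_num) (by omega) (by omega) (by omega) (by omega))
        (memW _ _ _ _ (by norm_num) (by norm_num) (by omega) (by omega) (by omega) (by omega))
        (memW _ _ _ _ (by norm_num) (by norm_num) (by omega) (by omega) (by omega) (by omega))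
        (by simp only [Prod.mk_add_mk, Prod.mk.injEq, true_and, and_true]; omega)
        (Or.inl (ltg (by omega))) (ltd (by omega)) (ltg (by omega))
        (neP (by omega)) (neP (by omega)) (neP (by omega)) (neP (by omega))
    · exact bintwo d _ (2, 2 * (k':ℤ) - 1, 1) (2, 2 * (k':ℤ) - 3, 4) (2, 2 * (k':ℤ) - 1, 0)
        (memW _ _ _ _ (by norm_num) (by norm_num) (by omega) (by omega) (by omega) (by omega))
        (memW _ _ _ _ (by norm_num) (by norm_num) (by omega) (by omega) (by omega) (by omega))
        (memW _ _ _ _ (by norm_num) (by norm_num) (by omega) (by omega) (by omega) (by omega))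
        (by simp only [Prod.mk_add_mk, Prod.mk.injEq, true_and, and_true]; omega)
        (Or.inl (ltg (by omega))) (ltd (by omega)) (ltg (by omega))
        (neP (by omega)) (neP (by omega)) (neP (by omega)) (neP (by omega))
    · exact binthree d _ (2, 2 * (k':ℤ) - 1, 0) (2, 2 * (k':ℤ), 0) (2, 2 * (k':ℤ) - 1, 1)
        (memW _ _ _ _ (by norm_num) (by norm_num) (by omega) (by omega) (by omega) (by omega))
        (memW _ _ _ _ (by norm_num) (by norm_num) (by omega) (by omega) (by omega) (by omega))
        (memW _ _ _ _ (by norm_num) (by norm_num) (by omega) (by omega) (by omega) (by omega))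
        (by simp only [Prod.mk_add_mk, Prod.mk.injEq, true_and, and_true]; omega)
        (Or.inl (ltg (by omega))) (Or.inl (ltg (by omega))) (ltg (by omega))
        (neP (by omega)) (neP (by omega)) (neP (by omega))
  · -- ρ = 1
    have h1 : ¬(γ = 2 * (k':ℤ) - 1 ∧ δ = 2) := fun h => hexc1 ⟨rfl, Or.inl h⟩
    have h2 : ¬(γ = 2 * (k':ℤ) ∧ δ = 0) := fun h => hexc1 ⟨rfl, Or.inr (Or.inl h)⟩
    have h3 : ¬(γ = 2 * (k':ℤ) ∧ δ = 1) := fun h => hexc1 ⟨rfl, Or.inr (Or.inr h)⟩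
    have hcase : (γ = 2 * (k':ℤ) - 1 ∧ δ = 1) ∨ (γ = 2 * (k':ℤ) - 2 ∧ δ = 3) := by omega
    rcases hcase with ⟨hg, he⟩ | ⟨hg, he⟩ <;> subst hg <;> subst he
    · exact bintwo d _ (2, 2 * (k':ℤ), 1) (2, 2 * (k':ℤ) - 1, 2) (2, 2 * (k':ℤ), 0)
        (memW _ _ _ _ (by norm_num) (by norm_num) (by omega) (by omega) (by omega) (by omega))
        (memW _ _ _ _ (by norm_num) (by norm_num) (by omega) (by omega) (by omega) (by omega))
        (memW _ _ _ _ (by norm_num) (by norm_num) (by omega) (by omega) (by omega) (by omega))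
        (by simp only [Prod.mk_add_mk, Prod.mk.injEq, true_and, and_true]; omega)
        (Or.inl (ltg (by omega))) (ltd (by omega)) (ltg (by omega))
        (neP (by omega)) (neP (by omega)) (neP (by omega)) (neP (by omega))
    · exact bintwo d _ (2, 2 * (k':ℤ), 1) (2, 2 * (k':ℤ) - 2, 4) (2, 2 * (k':ℤ), 0)
        (memW _ _ _ _ (by norm_num) (by norm_num) (by omega) (by omega) (by omega) (by omega))
        (memW _ _ _ _ (by norm_num) (by norm_num) (by omega) (by omega) (by omega) (by omega))
        (memW _ _ _ _ (by norm_num) (by norm_num) (by omega) (by omega) (by omega) (by omega))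
        (by simp only [Prod.mk_add_mk, Prod.mk.injEq, true_and, and_true]; omega)
        (Or.inl (ltg (by omega))) (ltd (by omega)) (ltg (by omega))
        (neP (by omega)) (neP (by omega)) (neP (by omega)) (neP (by omega))
  · -- ρ = 2
    have h1 : ¬(γ = 2 * (k':ℤ) ∧ δ = 1) := fun h => hexc2 ⟨rfl, Or.inl h⟩
    have h2 : ¬(γ = 2 * (k':ℤ) ∧ δ = 2) := fun h => hexc2 ⟨rfl, Or.inr (Or.inl h)⟩
    have h3 : ¬(γ = 2 * (k':ℤ) + 1 ∧ δ = 0) := fun h => hexc2 ⟨rfl, Or.inr (Or.inr h)⟩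
    have hcase : (γ = 2 * (k':ℤ) - 1 ∧ δ = 2) ∨ (γ = 2 * (k':ℤ) - 1 ∧ δ = 3) := by omega
    rcases hcase with ⟨hg, he⟩ | ⟨hg, he⟩ <;> subst hg <;> subst he
    · exact bintwo d _ (2, 2 * (k':ℤ), 1) (2, 2 * (k':ℤ) - 1, 3) (2, 2 * (k':ℤ), 0)
        (memW _ _ _ _ (by norm_num) (by norm_num) (by omega) (by omega) (by omega) (by omega))
        (memW _ _ _ _ (by norm_num) (by norm_num) (by omega) (by omega) (by omega) (by omega))
        (memW _ _ _ _ (by norm_num) (by norm_num) (by omega) (by omega) (by omega) (by omega))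
        (by simp only [Prod.mk_add_mk, Prod.mk.injEq, true_and, and_true]; omega)
        (Or.inl (ltg (by omega))) (ltd (by omega)) (ltg (by omega))
        (neP (by omega)) (neP (by omega)) (neP (by omega)) (neP (by omega))
    · exact bintwo d _ (2, 2 * (k':ℤ) + 1, 0) (2, 2 * (k':ℤ), 1) (2, 2 * (k':ℤ), 2)
        (memW _ _ _ _ (by norm_num) (by norm_num) (by omega) (by omega) (by omega) (by omega))
        (memW _ _ _ _ (by norm_num) (by norm_num) (by omega) (by omega) (by omega) (by omega))
        (memW _ _ _ _ (by norm_num) (by norm_num) (by omega) (by omega) (by omega) (by omega))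
        (by simp only [Prod.mk_add_mk, Prod.mk.injEq, true_and, and_true]; omega)
        (Or.inl (ltg (by omega))) (ltg (by omega)) (ltg (by omega))
        (neP (by omega)) (neP (by omega)) (neP (by omega)) (neP (by omega))
end

section
/- Let d ≥ 4 be an integer and (2,γ,δ) ∈ W_d. There exist (1,γ₁,δ₁), (1,γ₂,δ₂) ∈ W_d with γ₁ + γ₂ = γ and δ₁ + δ₂ = δ if and only if it is not the case that ρ ≠ 0 and (γ,δ) = (2k' + ⌊ρ/2⌋, ⌈ρ/2⌉ − ⌊ρ/2⌋), and it is not the case that d is odd and γ = 0. -/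
/-- Representation lemma: whenever `γ ≥ 1`, `δ ≥ 2` and `2 ≤ S ≤ 3γ + 2δ - 2`,
one can write `S = 3a + 2b` with `0 ≤ a ≤ γ` and `0 ≤ b ≤ δ`. -/
lemma rep32 (γ δ S : ℤ) (hγ : 1 ≤ γ) (hδ : 2 ≤ δ) (h0 : 2 ≤ S)
    (h1 : S ≤ 3 * γ + 2 * δ - 2) :
    ∃ a b : ℤ, 0 ≤ a ∧ a ≤ γ ∧ 0 ≤ b ∧ b ≤ δ ∧ 3 * a + 2 * b = S := by
  obtain ⟨a1, ha1⟩ : ∃ a1 : ℤ, a1 = (max 0 (S - 2 * δ) + 2) / 3 := ⟨_, rfl⟩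
  by_cases hpar : a1 % 2 = S % 2
  · exact ⟨a1, (S - 3 * a1) / 2, by omega, by omega, by omega, by omega, by omega⟩
  · exact ⟨a1 + 1, (S - 3 * (a1 + 1)) / 2, by omega, by omega, by omega, by omega, by omega⟩

/-- Write `d = 2k + ε` (`ε ∈ {0,1}`) and `d = 3k' + ρ` (`ρ ∈ {0,1,2}`). For
`(2,γ,δ) ∈ W_d`, there are `(1,γ₁,δ₁), (1,γ₂,δ₂) ∈ W_d` with `γ₁+γ₂ = γ` and
`δ₁+δ₂ = δ` iff it is not the case that `ρ ≠ 0` and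
`(γ,δ) = (2k' + ⌊ρ/2⌋, ⌈ρ/2⌉ − ⌊ρ/2⌋)`, and it is not the case that `d` is odd
and `γ = 0`. -/
theorem stmt13 (d k k' ε ρ : ℕ) (hd : 4 ≤ d)
    (hkε : d = 2 * k + ε) (hε : ε ≤ 1) (hkρ : d = 3 * k' + ρ) (hρ : ρ ≤ 2)
    (γ δ : ℤ) (hmem : ((2:ℤ), γ, δ) ∈ Wset d) :
    (∃ γ₁ δ₁ γ₂ δ₂ : ℤ, ((1:ℤ), γ₁, δ₁) ∈ Wset d ∧ ((1:ℤ), γ₂, δ₂) ∈ Wset d ∧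
        γ₁ + γ₂ = γ ∧ δ₁ + δ₂ = δ) ↔
      (¬ (ρ ≠ 0 ∧ γ = 2 * (k' : ℤ) + ((ρ / 2 : ℕ) : ℤ) ∧
            δ = (((ρ + 1) / 2 : ℕ) : ℤ) - ((ρ / 2 : ℕ) : ℤ)) ∧
       ¬ (Odd d ∧ γ = 0)) := by
  simp only [Wset, Set.mem_setOf_eq, Nat.odd_iff] at hmem ⊢
  constructor
  · rintro ⟨γ₁, δ₁, γ₂, δ₂, h1, h2, hg, hdel⟩
    interval_cases ρ <;> omega
  · rintro ⟨h1, h2⟩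
    by_cases hT : 3 * γ + 2 * δ ≤ (d : ℤ)
    · exact ⟨γ, δ, 0, 0, by omega, by omega, by omega, by omega⟩
    by_cases hg0 : γ = 0
    · exact ⟨0, (k : ℤ), 0, δ - k, by omega, by omega, by omega, by omega⟩
    by_cases hd0 : δ = 0
    · refine ⟨γ - (k' : ℤ), 0, (k' : ℤ), 0, ?_, ?_, ?_, ?_⟩ <;>
        [skip; skip; omega; omega] <;> interval_cases ρ <;> omega
    by_cases hd1 : δ = 1
    · refine ⟨γ - min γ (k' : ℤ), 1, min γ (k' : ℤ), 0, ?_, ?_, ?_, ?_⟩ <;>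
        [skip; skip; omega; omega] <;> interval_cases ρ <;> omega
    -- general case: γ ≥ 1, δ ≥ 2, 3γ + 2δ > d
    obtain ⟨a, b, ha0, ha1, hb0, hb1, hab⟩ :=
      rep32 γ δ (max 2 (3 * γ + 2 * δ - (d : ℤ))) (by omega) (by omega) (by omega) (by omega)
    exact ⟨a, b, γ - a, δ - b, by omega, by omega, by omega, by omega⟩
end

section
/- Let d = 2k+1 ≥ 5 be an odd integer and let (2,γ,δ) ∈ W_d. There exist (1,γ₁,δ₁), (2,γ₂,δ₂) ∈ W_d with (γ₁,δ₁) ≠ (0,0), γ₁ + γ₂ = γ and δ₁ + δ₂ = δ if and only if it is not the case that γ ≤ k+1 and δ = max{0, d−2γ}. (The monomial w_{(1,0,0)}w_{(2,γ,δ)} admits a non-trivial suitable 2-binomial exactly outside these exceptions.) -/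
/-- For odd `d = 2k+1 ≥ 5` and `(2,γ,δ) ∈ W_d`, there are
`(1,γ₁,δ₁), (2,γ₂,δ₂) ∈ W_d` with `(γ₁,δ₁) ≠ (0,0)`, `γ₁+γ₂ = γ` and `δ₁+δ₂ = δ`
iff it is not the case that `γ ≤ k+1` and `δ = max{0, d−2γ}`. -/
theorem stmt14 (d k : ℕ) (hdk : d = 2 * k + 1) (hd : 5 ≤ d)
    (γ δ : ℤ) (hmem : ((2:ℤ), γ, δ) ∈ Wset d) :
    (∃ γ₁ δ₁ γ₂ δ₂ : ℤ, ((1:ℤ), γ₁, δ₁) ∈ Wset d ∧ ((2:ℤ), γ₂, δ₂) ∈ Wset d ∧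
        (γ₁, δ₁) ≠ ((0:ℤ), (0:ℤ)) ∧ γ₁ + γ₂ = γ ∧ δ₁ + δ₂ = δ) ↔
      ¬ (γ ≤ (k:ℤ) + 1 ∧ δ = max 0 ((d:ℤ) - 2 * γ)) := by
  simp only [Wset, Set.mem_setOf_eq] at hmem ⊢
  obtain ⟨-, -, hγ, hδ, h1, h2⟩ := hmem
  constructor
  · rintro ⟨γ₁, δ₁, γ₂, δ₂, ⟨-, -, a1, a2, a3, a4⟩, ⟨-, -, b1, b2, b3, b4⟩, hne, hs1, hs2⟩
    rw [ne_eq, Prod.mk.injEq, not_and_or] at hne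
    omega
  · intro h
    rw [not_and_or] at h
    by_cases hδ1 : (1 : ℤ) ≤ δ ∧ d + 1 ≤ δ + 2 * γ
    · exact ⟨0, 1, γ, δ - 1, by norm_num; omega, by norm_num; omega,
        by simp, by ring, by ring⟩
    · refine ⟨1, 0, γ - 1, δ, by norm_num; omega, by norm_num; omega,
        by simp, by ring, by ring⟩
end

section
/- Let d = 2k+1 ≥ 5 be an odd integer and let (1,γ,δ) ∈ W_d. There exist (1,γ₁,δ₁), (2,γ₂,δ₂) ∈ W_d with (γ₂,δ₂) ≠ (0,d), γ₁ + γ₂ = γ and δ₁ + δ₂ = δ + d if and only if it is not the case that γ = 0 and 0 ≤ δ ≤ k, and it is not the case that (γ,δ) = (1, k−1). (The monomial w_{(1,γ,δ)}w_{(2,0,d)} admits a non-trivial suitable 2-binomial exactly outside these exceptions.) -/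
/-- For odd `d = 2k+1 ≥ 5` and `(1,γ,δ) ∈ W_d`, there are
`(1,γ₁,δ₁), (2,γ₂,δ₂) ∈ W_d` with `(γ₂,δ₂) ≠ (0,d)`, `γ₁+γ₂ = γ` and
`δ₁+δ₂ = δ+d` iff it is not the case that `γ = 0` and `0 ≤ δ ≤ k`, and it is not
the case that `(γ,δ) = (1, k−1)`. -/
theorem stmt15 (d k : ℕ) (hdk : d = 2 * k + 1) (hd : 5 ≤ d)
    (γ δ : ℤ) (hmem : ((1:ℤ), γ, δ) ∈ Wset d) :
    (∃ γ₁ δ₁ γ₂ δ₂ : ℤ, ((1:ℤ), γ₁, δ₁) ∈ Wset d ∧ ((2:ℤ), γ₂, δ₂) ∈ Wset d ∧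
        (γ₂, δ₂) ≠ ((0:ℤ), (d:ℤ)) ∧ γ₁ + γ₂ = γ ∧ δ₁ + δ₂ = δ + (d:ℤ)) ↔
      (¬ (γ = 0 ∧ 0 ≤ δ ∧ δ ≤ (k:ℤ)) ∧ ¬ (γ = 1 ∧ δ = (k:ℤ) - 1)) := by
  simp only [Wset, Set.mem_setOf_eq] at hmem ⊢
  obtain ⟨-, -, hγ, hδ, -, hsum⟩ := hmem
  constructor
  · rintro ⟨γ₁, δ₁, γ₂, δ₂, ⟨-, -, h1, h2, h3, h4⟩, ⟨-, -, h5, h6, h7, h8⟩, hne, hg, hdl⟩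
    have hne' : ¬(γ₂ = 0 ∧ δ₂ = (d : ℤ)) := by
      intro h; exact hne (by simp [h.1, h.2])
    omega
  · rintro ⟨he1, he2⟩
    rcases Int.even_or_odd γ with ⟨m, hm⟩ | ⟨m, hm⟩
    · -- γ = 2m, and γ ≥ 2 since γ = 0 gives exception 1
      refine ⟨0, δ + 3 * m, 2 * m, (d : ℤ) - 3 * m,
        ⟨by norm_num, by norm_num, le_refl _, by omega, by omega, by omega⟩,
        ⟨by norm_num, by norm_num, by omega, by omega, by omega, by omega⟩,
        ?_, by omega, by omega⟩
      intro h
      rw [Prod.mk.injEq] at h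
      omega
    · by_cases htight : 2 * δ + 3 * γ = (d : ℤ)
      · -- γ = 2m+1, tight case; then m ≥ 1 since γ = 1 gives δ = k-1
        refine ⟨1, δ + 3 * m, 2 * m, (d : ℤ) - 3 * m,
          ⟨by norm_num, by norm_num, by norm_num, by omega, by omega, by omega⟩,
          ⟨by norm_num, by norm_num, by omega, by omega, by omega, by omega⟩,
          ?_, by omega, by omega⟩
        intro h
        rw [Prod.mk.injEq] at h
        omega
      · -- γ = 2m+1, 2δ+3γ < d
        refine ⟨0, δ + 3 * m + 2, 2 * m + 1, (d : ℤ) - 3 * m - 2,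
          ⟨by norm_num, by norm_num, le_refl _, by omega, by omega, by omega⟩,
          ⟨by norm_num, by norm_num, by omega, by omega, by omega, by omega⟩,
          ?_, by omega, by omega⟩
        intro h
        rw [Prod.mk.injEq] at h
        omega
end

section
/- Let d = 2k+1 ≥ 5 be an odd integer. Each of the following triples (a₁,a₂,a₃) of elements of W_d admits a non-trivial suitable 3-binomial, i.e. there exist b₁, b₂, b₃ ∈ W_d with b₁ + b₂ + b₃ = a₁ + a₂ + a₃ componentwise in ℤ³ and {b₁,b₂,b₃} ∩ {a₁,a₂,a₃} = ∅: (i) ((0,0,0), (2,0,d), (1,0,δ)) for every 0 ≤ δ ≤ k−1; (ii) ((0,0,0), (2,0,d), (3,d,0)); (iii) ((0,0,0), (1,0,0), (3,d,0)); (iv) ((1,0,0), (2,γ,d−2γ), (3,d,0)) for every 0 ≤ γ ≤ k−1. -/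
/-- The triple `(a₁,a₂,a₃)` of elements of `W_d` admits a non-trivial suitable
3-binomial: there are `b₁,b₂,b₃ ∈ W_d` with `b₁+b₂+b₃ = a₁+a₂+a₃` and
`{b₁,b₂,b₃} ∩ {a₁,a₂,a₃} = ∅`. -/
def AdmitsNT3 (d : ℕ) (a₁ a₂ a₃ : ℤ × ℤ × ℤ) : Prop :=
  ∃ b₁ b₂ b₃ : ℤ × ℤ × ℤ, b₁ ∈ Wset d ∧ b₂ ∈ Wset d ∧ b₃ ∈ Wset d ∧
    b₁ + b₂ + b₃ = a₁ + a₂ + a₃ ∧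
    ({b₁, b₂, b₃} : Set (ℤ × ℤ × ℤ)) ∩ {a₁, a₂, a₃} = ∅

/-- For odd `d = 2k+1 ≥ 5`, each of the triples
`((0,0,0),(2,0,d),(1,0,δ))` (`0 ≤ δ ≤ k−1`), `((0,0,0),(2,0,d),(3,d,0))`,
`((0,0,0),(1,0,0),(3,d,0))` and `((1,0,0),(2,γ,d−2γ),(3,d,0))` (`0 ≤ γ ≤ k−1`)
admits a non-trivial suitable 3-binomial. -/
theorem stmt17 (d k : ℕ) (hdk : d = 2 * k + 1) (hd : 5 ≤ d) :
    (∀ δ : ℤ, 0 ≤ δ → δ ≤ (k:ℤ) - 1 →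
      AdmitsNT3 d ((0:ℤ),0,0) ((2:ℤ),0,(d:ℤ)) ((1:ℤ),0,δ)) ∧
    AdmitsNT3 d ((0:ℤ),0,0) ((2:ℤ),0,(d:ℤ)) ((3:ℤ),(d:ℤ),0) ∧
    AdmitsNT3 d ((0:ℤ),0,0) ((1:ℤ),0,0) ((3:ℤ),(d:ℤ),0) ∧
    (∀ γ : ℤ, 0 ≤ γ → γ ≤ (k:ℤ) - 1 →
      AdmitsNT3 d ((1:ℤ),0,0) ((2:ℤ),γ,(d:ℤ) - 2 * γ) ((3:ℤ),(d:ℤ),0)) := by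
  refine ⟨?_, ?_, ?_, ?_⟩
  · intro δ h0 h1
    refine ⟨(1, 0, (k:ℤ)), (1, 0, (k:ℤ)), (1, 0, δ + 1), ?_, ?_, ?_, ?_, ?_⟩ <;>
      simp [Wset, Set.eq_empty_iff_forall_notMem, Prod.ext_iff] <;> omega
  · obtain ⟨m, hm⟩ : ∃ m : ℕ, m = (k + 1) / 3 := ⟨_, rfl⟩
    have hm3 : 3 * m ≤ k + 1 ∧ k + 1 ≤ 3 * m + 2 := by omega
    refine ⟨(2, 2 * (m:ℤ), 2 * k + 1 - 3 * m), (2, 2 * (k:ℤ) - 2 * m, 3 * m - k + 1),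
      (1, 1, (k:ℤ) - 1), ?_, ?_, ?_, ?_, ?_⟩ <;>
      simp [Wset, Set.eq_empty_iff_forall_notMem, Prod.ext_iff] <;> omega
  · obtain ⟨q, hq⟩ : ∃ q : ℕ, q = k / 2 := ⟨_, rfl⟩
    have hq2 : 2 * q ≤ k ∧ k ≤ 2 * q + 1 := by omega
    refine ⟨(2, (k:ℤ) + 1, 0), (1, (k:ℤ) - q, 0), (1, (q:ℤ), 0), ?_, ?_, ?_, ?_, ?_⟩ <;>
      simp [Wset, Set.eq_empty_iff_forall_notMem, Prod.ext_iff] <;> omega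
  · intro γ h0 h1
    refine ⟨(2, (k:ℤ), 1), (2, (k:ℤ), 1), (2, γ + 1, (d:ℤ) - 2 * γ - 2), ?_, ?_, ?_, ?_, ?_⟩ <;>
      simp [Wset, Set.eq_empty_iff_forall_notMem, Prod.ext_iff] <;> omega
end

section
/- Let d = 2k+1 ≥ 5 be an odd integer. None of the triples ((0,0,0), (2,0,d), (1,0,k)), ((1,0,0), (2,k,1), (3,d,0)), ((1,0,0), (2,k+1,0), (3,d,0)) of elements of W_d admits a non-trivial suitable 3-binomial: for each such triple (a₁,a₂,a₃) there exist no b₁, b₂, b₃ ∈ W_d with b₁ + b₂ + b₃ = a₁ + a₂ + a₃ componentwise in ℤ³ and {b₁,b₂,b₃} ∩ {a₁,a₂,a₃} = ∅. -/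
/-- For odd `d = 2k+1 ≥ 5`, none of the triples `((0,0,0),(2,0,d),(1,0,k))`,
`((1,0,0),(2,k,1),(3,d,0))`, `((1,0,0),(2,k+1,0),(3,d,0))` admits a non-trivial
suitable 3-binomial. -/
theorem stmt18 (d k : ℕ) (hdk : d = 2 * k + 1) (hd : 5 ≤ d) :
    ¬ AdmitsNT3 d ((0:ℤ),0,0) ((2:ℤ),0,(d:ℤ)) ((1:ℤ),0,(k:ℤ)) ∧
    ¬ AdmitsNT3 d ((1:ℤ),0,0) ((2:ℤ),(k:ℤ),1) ((3:ℤ),(d:ℤ),0) ∧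
    ¬ AdmitsNT3 d ((1:ℤ),0,0) ((2:ℤ),(k:ℤ)+1,0) ((3:ℤ),(d:ℤ),0) := by
  refine ⟨?_, ?_, ?_⟩ <;>
  · rintro ⟨⟨r1,g1,e1⟩,⟨r2,g2,e2⟩,⟨r3,g3,e3⟩, h1,h2,h3,hsum,hdisj⟩
    simp only [Wset, Set.mem_setOf_eq] at h1 h2 h3
    simp only [Prod.mk_add_mk, Prod.mk.injEq] at hsum
    rw [Set.eq_empty_iff_forall_notMem] at hdisj
    simp only [Set.mem_inter_iff, Set.mem_insert_iff, Set.mem_singleton_iff, not_and, not_or,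
      Prod.forall, Prod.mk.injEq, not_and_or] at hdisj
    have d1 := hdisj r1 g1 e1 (Or.inl ⟨rfl,rfl,rfl⟩)
    have d2 := hdisj r2 g2 e2 (Or.inr (Or.inl ⟨rfl,rfl,rfl⟩))
    have d3 := hdisj r3 g3 e3 (Or.inr (Or.inr ⟨rfl,rfl,rfl⟩))
    obtain ⟨h1a,h1b,_⟩ := h1
    obtain ⟨h2a,h2b,_⟩ := h2
    obtain ⟨h3a,h3b,_⟩ := h3
    interval_cases r1 <;> interval_cases r2 <;> interval_cases r3 <;> omega
end

section
/- Let d ≥ 4 be an integer, k a field, and n ≥ 3. Let m and m' be degree-n monomials in the variables w_x (x ∈ W_d) with ψ(m) = ψ(m'). Then m − m' belongs to the ideal of k[w_x : x ∈ W_d] generated by all binomials u − u' of degree-(n−1) monomials with ψ(u) = ψ(u') if and only if there exists a finite sequence m = m₁, m₂, …, m_t = m' of degree-n monomials such that ψ(m_j) = ψ(m) for every j and, for each 1 ≤ j < t, the supports of m_j and m_{j+1} have a common variable. -/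
open MvPolynomial

noncomputable section AuxStmt19

namespace AuxStmt19

variable {K : Type*} [Field K] {W : Type*}

/-- total degree of an exponent vector -/
def deg (α : W →₀ ℕ) : ℕ := α.sum fun _ k => k

lemma deg_add (a b : W →₀ ℕ) : deg (a + b) = deg a + deg b := by
  unfold deg; exact Finsupp.sum_add_index' (fun _ => rfl) (fun _ _ _ => rfl)

lemma deg_single (x : W) : deg (Finsupp.single x 1) = 1 := by
  unfold deg; simp

lemma deg_zero : deg (0 : W →₀ ℕ) = 0 := by unfold deg; simp

lemma deg_eq_zero {α : W →₀ ℕ} (h : deg α = 0) : α = 0 := by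
  unfold deg at h
  ext x
  rw [Finsupp.zero_apply]
  by_contra hx
  have hxs : x ∈ α.support := Finsupp.mem_support_iff.mpr hx
  rw [Finsupp.sum] at h
  have : α x ≤ ∑ y ∈ α.support, α y :=
    Finset.single_le_sum (f := fun y => α y) (fun _ _ => Nat.zero_le _) hxs
  omega

lemma deg_sum_single {nn : ℕ} (e : Fin nn → W) :
    deg (∑ i, Finsupp.single (e i) 1) = nn := by
  induction nn with
  | zero => simp [deg_zero]
  | succ m ih =>
    rw [Fin.sum_univ_succ, deg_add, deg_single, ih (fun i => e i.succ)]
    omega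

lemma exists_enum : ∀ (nn : ℕ) (α : W →₀ ℕ), deg α = nn →
    ∃ e : Fin nn → W, α = ∑ i, Finsupp.single (e i) 1 := by
  intro nn
  induction nn with
  | zero =>
    intro α h
    exact ⟨Fin.elim0, by rw [deg_eq_zero h]; simp⟩
  | succ m ih =>
    intro α h
    have hne : α ≠ 0 := fun h0 => by simp [h0, deg_zero] at h
    obtain ⟨x, hx⟩ := Finsupp.support_nonempty_iff.mpr hne
    have hx' : α x ≠ 0 := Finsupp.mem_support_iff.mp hx
    have hle : Finsupp.single x 1 ≤ α := Finsupp.single_le_iff.mpr (by omega)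
    have hsplit : (α - Finsupp.single x 1) + Finsupp.single x 1 = α :=
      tsub_add_cancel_of_le hle
    have hdeg : deg (α - Finsupp.single x 1) = m := by
      have := deg_add (α - Finsupp.single x 1) (Finsupp.single x 1)
      rw [hsplit, deg_single] at this
      omega
    obtain ⟨e', he'⟩ := ih _ hdeg
    refine ⟨Fin.cons x e', ?_⟩
    rw [Fin.sum_univ_succ, Fin.cons_zero]
    simp only [Fin.cons_succ]
    rw [← he', add_comm]
    exact hsplit.symm

lemma mem_of_single_sum {nn : ℕ} (e : Fin nn → W) (x : W)
    (hx : (∑ i, Finsupp.single (e i) 1) x ≠ 0) : ∃ i, e i = x := by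
  classical
  by_contra hc
  push_neg at hc
  apply hx
  rw [Finset.sum_apply']
  exact Finset.sum_eq_zero fun i _ => by
    rw [Finsupp.single_apply, if_neg (hc i)]

lemma prod_monomial_one {ι : Type*} (s : Finset ι) (c : ι → (W →₀ ℕ)) :
    (∏ i ∈ s, monomial (c i) (1:K)) = monomial (∑ i ∈ s, c i) 1 := by
  classical
  induction s using Finset.cons_induction with
  | empty => simp [MvPolynomial.monomial_zero']
  | cons a s ha ih => rw [Finset.prod_cons, Finset.sum_cons, ih, monomial_mul, one_mul]

lemma prodX (nn : ℕ) (e : Fin nn → W) :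
    (∏ i, X (e i) : MvPolynomial W K) = monomial (∑ i, Finsupp.single (e i) 1) 1 := by
  rw [← prod_monomial_one]; rfl

lemma monomial_one_inj {a b : W →₀ ℕ} (h : (monomial a (1:K)) = monomial b 1) : a = b := by
  rcases (monomial_eq_monomial_iff a b (1:K) 1).mp h with ⟨h1, _⟩ | ⟨h1, _⟩
  · exact h1
  · exact absurd h1 one_ne_zero

/-- projection onto monomials satisfying a predicate, as a `K`-linear map -/
def Pl (K : Type*) [Field K] {W : Type*} (pred : (W →₀ ℕ) → Prop) [DecidablePred pred] :
    MvPolynomial W K →ₗ[K] MvPolynomial W K :=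
  Finsupp.linearCombination K (fun μ => if pred μ then (monomial μ 1 : MvPolynomial W K) else 0)
    ∘ₗ (AddMonoidAlgebra.coeffLinearEquiv K).toLinearMap

lemma Pl_monomial (pred : (W →₀ ℕ) → Prop) [DecidablePred pred] (a : W →₀ ℕ) (c : K) :
    Pl K pred (monomial a c) = if pred a then monomial a c else 0 := by
  unfold Pl
  have hco : AddMonoidAlgebra.coeffLinearEquiv K (monomial a c) = Finsupp.single a c := rfl
  rw [LinearMap.comp_apply, LinearEquiv.coe_coe, hco, Finsupp.linearCombination_single]
  split <;> simp [single_eq_monomial, smul_monomial]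

/-- evaluation functional used for the connectivity argument -/
def chi (K : Type*) [Field K] {W : Type*} (c : (W →₀ ℕ) → Prop) [DecidablePred c] :
    MvPolynomial W K →ₗ[K] K :=
  Finsupp.linearCombination K (fun μ => if c μ then (1:K) else 0)
    ∘ₗ (AddMonoidAlgebra.coeffLinearEquiv K).toLinearMap

lemma chi_monomial (c : (W →₀ ℕ) → Prop) [DecidablePred c] (a : W →₀ ℕ) :
    chi K c (monomial a (1:K)) = if c a then 1 else 0 := by
  unfold chi
  have hco : AddMonoidAlgebra.coeffLinearEquiv K (monomial a (1:K)) = Finsupp.single a 1 := rfl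
  rw [LinearMap.comp_apply, LinearEquiv.coe_coe, hco, Finsupp.linearCombination_single]
  simp

/-- connectivity from membership in the span of edge-differences -/
lemma connected (E : (W →₀ ℕ) → (W →₀ ℕ) → Prop) (a b : W →₀ ℕ)
    (h : (monomial a 1 - monomial b 1 : MvPolynomial W K) ∈ Submodule.span K
      {q : MvPolynomial W K | ∃ x y, E x y ∧ q = monomial x (1:K) - monomial y 1}) :
    Relation.ReflTransGen (fun x y => E x y ∨ E y x) a b := by
  classical
  set c : (W →₀ ℕ) → Prop := Relation.ReflTransGen (fun x y => E x y ∨ E y x) a with hc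
  have hker : {q : MvPolynomial W K | ∃ x y, E x y ∧ q = monomial x (1:K) - monomial y 1}
      ⊆ (LinearMap.ker (chi K c) : Set (MvPolynomial W K)) := by
    rintro q ⟨x, y, hxy, rfl⟩
    have hiff : c x ↔ c y :=
      ⟨fun hx => hx.tail (Or.inl hxy), fun hy => hy.tail (Or.inr hxy)⟩
    simp only [SetLike.mem_coe, LinearMap.mem_ker, map_sub, chi_monomial]
    by_cases hx : c x
    · rw [if_pos hx, if_pos (hiff.mp hx), sub_self]
    · rw [if_neg hx, if_neg (fun hy => hx (hiff.mpr hy)), sub_self]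
  have h0 : chi K c (monomial a 1 - monomial b 1) = 0 :=
    (Submodule.span_le.mpr hker) h
  rw [map_sub, chi_monomial, chi_monomial, if_pos (Relation.ReflTransGen.refl)] at h0
  by_cases hb : c b
  · exact hb
  · rw [if_neg hb, sub_zero] at h0
    exact absurd h0 one_ne_zero

end AuxStmt19

end AuxStmt19

noncomputable section PsiAux

namespace AuxStmt19

/-- exponent vector of `psi(w_x)` -/
def phif (d : ℕ) (x : ↥(Wset d)) : Fin 4 →₀ ℕ :=
  Finsupp.single 0 ((x.val.2.2 + 2 * x.val.2.1 + (1 - x.val.1) * (d : ℤ)).toNat) +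
  Finsupp.single 1 ((x.val.1 * (d : ℤ) - 2 * x.val.2.2 - 3 * x.val.2.1).toNat) +
  Finsupp.single 2 (x.val.2.2.toNat) +
  Finsupp.single 3 (x.val.2.1.toNat)

lemma psi_X (d : ℕ) (K : Type*) [Field K] (x : ↥(Wset d)) :
    psi d K (X x) = monomial (phif d x) 1 := by
  unfold psi phif
  rw [aeval_X, X_pow_eq_monomial, X_pow_eq_monomial, X_pow_eq_monomial, X_pow_eq_monomial,
    monomial_mul, monomial_mul, monomial_mul, one_mul, one_mul, one_mul]

lemma psi_X_ne_zero (d : ℕ) (K : Type*) [Field K] (x : ↥(Wset d)) :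
    psi d K (X x) ≠ 0 := by
  rw [psi_X]
  simp [MvPolynomial.monomial_eq_zero]

/-- the exponent-vector map induced by `psi`, as an additive hom -/
def PsiF (d : ℕ) : (↥(Wset d) →₀ ℕ) →+ (Fin 4 →₀ ℕ) :=
  Finsupp.liftAddHom (fun x => AddMonoidHom.flip (smulAddHom ℕ (Fin 4 →₀ ℕ)) (phif d x))

lemma PsiF_single (d : ℕ) (x : ↥(Wset d)) :
    PsiF d (Finsupp.single x 1) = phif d x := by
  unfold PsiF
  rw [Finsupp.liftAddHom_apply_single]
  simp

lemma psi_prodX (d : ℕ) (K : Type*) [Field K] (nn : ℕ) (e : Fin nn → ↥(Wset d)) :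
    psi d K (∏ i, X (e i)) = monomial (PsiF d (∑ i, Finsupp.single (e i) 1)) 1 := by
  rw [map_prod, Finset.prod_congr rfl (fun i _ => psi_X d K (e i)), prod_monomial_one, map_sum]
  simp_rw [PsiF_single]

end AuxStmt19

end PsiAux

open AuxStmt19

/-- For `d ≥ 4` and `n ≥ 3`: a suitable `n`-binomial `m − m'` (with
`m = ∏ w_{f i}`, `m' = ∏ w_{f' i}` and `ψ(m) = ψ(m')`) lies in the ideal
generated by the suitable `(n−1)`-binomials iff there is an
`I₊(η)_n`-sequence from `m` to `m'`: a finite sequence of degree-`n` monomials,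
all with the same `ψ`-image, starting at `m`, ending at `m'`, in which
consecutive monomials share a common variable. -/
theorem stmt19 (K : Type*) [Field K] (d : ℕ) (hd : 4 ≤ d)
    (n : ℕ) (hn : 3 ≤ n) (f f' : Fin n → ↥(Wset d))
    (h : psi d K (∏ i, X (f i)) = psi d K (∏ i, X (f' i))) :
    ((∏ i, X (f i)) - (∏ i, X (f' i)) ∈
        Ideal.span {g : MvPolynomial ↥(Wset d) K |
          ∃ u u' : Fin (n - 1) → ↥(Wset d),
            psi d K (∏ i, X (u i)) = psi d K (∏ i, X (u' i)) ∧
            g = (∏ i, X (u i)) - ∏ i, X (u' i)}) ↔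
      ∃ (t : ℕ) (g : Fin (t + 1) → Fin n → ↥(Wset d)),
        ((∏ i, X (g 0 i) : MvPolynomial ↥(Wset d) K) = ∏ i, X (f i)) ∧
        ((∏ i, X (g (Fin.last t) i) : MvPolynomial ↥(Wset d) K) = ∏ i, X (f' i)) ∧
        (∀ j, psi d K (∏ i, X (g j i)) = psi d K (∏ i, X (f i))) ∧
        (∀ j : Fin t, ∃ x : ↥(Wset d),
          (∃ i, g j.castSucc i = x) ∧ (∃ i, g j.succ i = x)) := by
  classical
  constructor
  · -- forward direction
    intro hmem
    set α0 : ↥(Wset d) →₀ ℕ := ∑ i, Finsupp.single (f i) 1 with hα0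
    set β0 : ↥(Wset d) →₀ ℕ := ∑ i, Finsupp.single (f' i) 1 with hβ0
    have hm : (∏ i, X (f i) : MvPolynomial ↥(Wset d) K) = monomial α0 1 := prodX n f
    have hm' : (∏ i, X (f' i) : MvPolynomial ↥(Wset d) K) = monomial β0 1 := prodX n f'
    have hΨ : PsiF d β0 = PsiF d α0 := by
      have h2 := h
      rw [psi_prodX, psi_prodX] at h2
      exact (monomial_one_inj h2).symm
    set pred : (↥(Wset d) →₀ ℕ) → Prop := fun μ => deg μ = n ∧ PsiF d μ = PsiF d α0 with hpred
    have hpredα0 : pred α0 := ⟨deg_sum_single f, rfl⟩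
    have hpredβ0 : pred β0 := ⟨deg_sum_single f', hΨ⟩
    set B : Set (MvPolynomial ↥(Wset d) K) := {q | ∃ (μ : ↥(Wset d) →₀ ℕ) (u u' : Fin (n-1) → ↥(Wset d)),
        psi d K (∏ i, X (u i)) = psi d K (∏ i, X (u' i)) ∧
        q = monomial μ 1 * ((∏ i, X (u i)) - ∏ i, X (u' i))} with hB
    -- Step 1: the ideal is contained in the K-span of B
    have hBmono : ∀ (u : ↥(Wset d) →₀ ℕ) (a : K), ∀ q ∈ Submodule.span K B,
        (monomial u a : MvPolynomial ↥(Wset d) K) * q ∈ Submodule.span K B := by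
      intro u a q hq
      refine Submodule.span_induction (p := fun q _ => (monomial u a : MvPolynomial ↥(Wset d) K) * q ∈ Submodule.span K B)
        ?_ ?_ ?_ ?_ hq
      · rintro w ⟨μ, v, v', hpsi, rfl⟩
        have heq : (monomial u a : MvPolynomial ↥(Wset d) K) * (monomial μ 1 * ((∏ i, X (v i)) - ∏ i, X (v' i)))
            = a • (monomial (u + μ) 1 * ((∏ i, X (v i)) - ∏ i, X (v' i))) := by
          rw [← mul_assoc, monomial_mul, mul_one, ← smul_mul_assoc, smul_monomial,
            smul_eq_mul, mul_one]
        rw [heq]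
        exact Submodule.smul_mem _ _ (Submodule.subset_span ⟨u + μ, v, v', hpsi, rfl⟩)
      · show (monomial u a : MvPolynomial ↥(Wset d) K) * 0 ∈ Submodule.span K B
        rw [mul_zero]; exact Submodule.zero_mem _
      · intro x y _ _ hx hy
        show (monomial u a : MvPolynomial ↥(Wset d) K) * (x + y) ∈ Submodule.span K B
        rw [mul_add]; exact Submodule.add_mem _ hx hy
      · intro c x _ hx
        show (monomial u a : MvPolynomial ↥(Wset d) K) * (c • x) ∈ Submodule.span K B
        rw [mul_smul_comm]; exact Submodule.smul_mem _ _ hx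
    have hBmul : ∀ r : MvPolynomial ↥(Wset d) K, ∀ q ∈ Submodule.span K B, r * q ∈ Submodule.span K B := by
      intro r
      refine MvPolynomial.induction_on' r (fun u a => hBmono u a) ?_
      intro p q hp hq w hw
      rw [add_mul]
      exact Submodule.add_mem _ (hp w hw) (hq w hw)
    have hmemB : (∏ i, X (f i) : MvPolynomial ↥(Wset d) K) - ∏ i, X (f' i) ∈ Submodule.span K B := by
      refine Submodule.span_induction (p := fun q _ => q ∈ Submodule.span K B) ?_ ?_ ?_ ?_ hmem
      · rintro w ⟨u, u', hpsi, rfl⟩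
        exact Submodule.subset_span ⟨0, u, u', hpsi, by
          rw [MvPolynomial.monomial_zero', map_one, one_mul]⟩
      · exact Submodule.zero_mem _
      · intro x y _ _ hx hy; exact Submodule.add_mem _ hx hy
      · intro r x _ hx
        show r • x ∈ Submodule.span K B
        rw [smul_eq_mul]; exact hBmul r x hx
    -- Step 2: project to the bigraded component of m
    set E : (↥(Wset d) →₀ ℕ) → (↥(Wset d) →₀ ℕ) → Prop :=
      fun a b => pred a ∧ pred b ∧ ∃ x, a x ≠ 0 ∧ b x ≠ 0 with hE
    set D : Set (MvPolynomial ↥(Wset d) K) := {q | ∃ a b : ↥(Wset d) →₀ ℕ, E a b ∧ q = monomial a 1 - monomial b 1} with hD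
    have hPB : ∀ q ∈ B, Pl K pred q ∈ Submodule.span K D := by
      rintro q ⟨μ, v, v', hpsi, rfl⟩
      set A : ↥(Wset d) →₀ ℕ := ∑ i, Finsupp.single (v i) 1 with hA
      set A' : ↥(Wset d) →₀ ℕ := ∑ i, Finsupp.single (v' i) 1 with hA'
      have hvA : (∏ i, X (v i) : MvPolynomial ↥(Wset d) K) = monomial A 1 := prodX _ v
      have hvA' : (∏ i, X (v' i) : MvPolynomial ↥(Wset d) K) = monomial A' 1 := prodX _ v'
      have hΨAA' : PsiF d A = PsiF d A' := by
        rw [psi_prodX, psi_prodX] at hpsi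
        exact monomial_one_inj hpsi
      have hdegA : deg A = n - 1 := deg_sum_single v
      have hdegA' : deg A' = n - 1 := deg_sum_single v'
      have hq : monomial μ 1 * ((∏ i, X (v i)) - ∏ i, X (v' i))
          = monomial (μ + A) (1:K) - monomial (μ + A') 1 := by
        rw [hvA, hvA', mul_sub, monomial_mul, monomial_mul, mul_one]
      have hpredIff : pred (μ + A) ↔ pred (μ + A') := by
        show (deg (μ + A) = n ∧ _) ↔ (deg (μ + A') = n ∧ _)
        rw [deg_add, deg_add, hdegA, hdegA', map_add, map_add, hΨAA']
      rw [hq, map_sub, Pl_monomial, Pl_monomial]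
      by_cases hp1 : pred (μ + A)
      · rw [if_pos hp1, if_pos (hpredIff.mp hp1)]
        refine Submodule.subset_span ⟨μ + A, μ + A', ⟨hp1, hpredIff.mp hp1, ?_⟩, rfl⟩
        have hdμ : deg μ = 1 := by
          have h1 := hp1.1
          rw [deg_add, hdegA] at h1
          omega
        have hμne : μ ≠ 0 := by
          intro h0
          rw [h0, deg_zero] at hdμ
          omega
        obtain ⟨y, hy⟩ := Finsupp.support_nonempty_iff.mpr hμne
        have hyy := Finsupp.mem_support_iff.mp hy
        exact ⟨y, by rw [Finsupp.add_apply]; omega, by rw [Finsupp.add_apply]; omega⟩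
      · rw [if_neg hp1, if_neg (fun hp2 => hp1 (hpredIff.mpr hp2)), sub_zero]
        exact Submodule.zero_mem _
    have hPfix : Pl K pred ((∏ i, X (f i) : MvPolynomial ↥(Wset d) K) - ∏ i, X (f' i))
        = (∏ i, X (f i) : MvPolynomial ↥(Wset d) K) - ∏ i, X (f' i) := by
      rw [hm, hm', map_sub, Pl_monomial, Pl_monomial, if_pos hpredα0, if_pos hpredβ0]
    have hmemD : (monomial α0 (1:K) : MvPolynomial ↥(Wset d) K) - monomial β0 1 ∈ Submodule.span K D := by
      rw [← hm, ← hm', ← hPfix]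
      exact Submodule.span_le.mpr (by rintro _ ⟨q, hq, rfl⟩; exact hPB q hq)
        (Submodule.apply_mem_span_image_of_mem_span (Pl K pred) hmemB)
    -- Step 3: connectivity
    have hconn : Relation.ReflTransGen (fun a b => E a b ∨ E b a) α0 β0 :=
      connected E α0 β0 hmemD
    -- Step 4: build the sequence
    obtain ⟨l, hchain, hlastl⟩ := List.exists_isChain_cons_of_relationReflTransGen hconn
    set L : List (↥(Wset d) →₀ ℕ) := α0 :: l with hLdef
    have hlenL : L.length = l.length + 1 := rfl
    have hallpred : ∀ x ∈ L, pred x := by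
      have key : ∀ (a : ↥(Wset d) →₀ ℕ) (l' : List (↥(Wset d) →₀ ℕ)),
          List.Chain (fun a b => E a b ∨ E b a) a l' → pred a → ∀ x ∈ a :: l', pred x := by
        intro a l'
        induction l' generalizing a with
        | nil =>
          intro _ ha x hx
          rw [List.mem_singleton] at hx
          rwa [hx]
        | cons b tl ih =>
          intro hch ha x hx
          rw [List.Chain, List.isChain_cons_cons] at hch
          have hb : pred b := by
            rcases hch.1 with h1 | h1
            · exact h1.2.1
            · exact h1.1
          rcases List.mem_cons.mp hx with rfl | hx'
          · exact ha
          · exact ih b hch.2 hb x hx'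
      exact key α0 l hchain hpredα0
    have hgete : ∀ j : Fin (l.length + 1), ∃ e : Fin n → ↥(Wset d),
        L.get (Fin.cast hlenL.symm j) = ∑ i, Finsupp.single (e i) 1 :=
      fun j => exists_enum n _ (hallpred _ (L.get_mem _)).1
    choose gs hgs using hgete
    refine ⟨l.length, gs, ?_, ?_, ?_, ?_⟩
    · rw [prodX n (gs 0), ← hgs 0, hm]
      rfl
    · rw [prodX n (gs (Fin.last l.length)), ← hgs (Fin.last l.length), hm']
      have : L.get (Fin.cast hlenL.symm (Fin.last l.length)) = β0 := by
        rw [← hlastl, List.getLast_eq_getElem]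
        rfl
      rw [this]
    · intro j
      rw [psi_prodX d K n (gs j), ← hgs j, psi_prodX d K n f]
      have : PsiF d (L.get (Fin.cast hlenL.symm j)) = PsiF d α0 :=
        (hallpred _ (L.get_mem _)).2
      rw [this]
    · intro j
      have hch' : List.Chain' (fun a b => E a b ∨ E b a) L := hchain
      have hedge := List.isChain_iff_getElem.mp hch' j.val (by
        rw [hlenL]
        simp)
      have hshared : ∃ x, (L.get (Fin.cast hlenL.symm j.castSucc)) x ≠ 0 ∧
          (L.get (Fin.cast hlenL.symm j.succ)) x ≠ 0 := by
        rcases hedge with he | he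
        · obtain ⟨x, hx1, hx2⟩ := he.2.2
          exact ⟨x, hx1, hx2⟩
        · obtain ⟨x, hx1, hx2⟩ := he.2.2
          exact ⟨x, hx2, hx1⟩
      obtain ⟨x, hx1, hx2⟩ := hshared
      refine ⟨x, ?_, ?_⟩
      · exact mem_of_single_sum (gs j.castSucc) x (by rw [← hgs j.castSucc]; exact hx1)
      · exact mem_of_single_sum (gs j.succ) x (by rw [← hgs j.succ]; exact hx2)
  · -- reverse direction
    rintro ⟨t, gs, h0, hlast, hψ, hadj⟩
    obtain ⟨nn, rfl⟩ : ∃ nn, n = nn + 1 := ⟨n - 1, by omega⟩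
    set M : ℕ → MvPolynomial ↥(Wset d) K := fun j => ∏ i, X (gs ⟨min j t, Nat.lt_succ_of_le (min_le_right _ _)⟩ i)
      with hM
    have hM0 : M 0 = ∏ i, X (f i) := by
      have e0 : (⟨min 0 t, Nat.lt_succ_of_le (min_le_right _ _)⟩ : Fin (t+1)) = 0 := by
        ext; simp
      simp only [hM, e0]
      exact h0
    have hMt : M t = ∏ i, X (f' i) := by
      have et : (⟨min t t, Nat.lt_succ_of_le (min_le_right _ _)⟩ : Fin (t+1)) = Fin.last t := by
        ext; simp
      simp only [hM, et]
      exact hlast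
    have key : (∏ i, X (f i) : MvPolynomial ↥(Wset d) K) - ∏ i, X (f' i)
        = ∑ j ∈ Finset.range t, (M j - M (j + 1)) := by
      rw [Finset.sum_range_sub' M t, hM0, hMt]
    rw [key]
    refine Ideal.sum_mem _ ?_
    intro j hj
    rw [Finset.mem_range] at hj
    set jf : Fin t := ⟨j, hj⟩ with hjf
    have hMj : M j = ∏ i, X (gs jf.castSucc i) := by
      have ej : (⟨min j t, Nat.lt_succ_of_le (min_le_right _ _)⟩ : Fin (t+1)) = jf.castSucc := by
        ext; simp [jf, Nat.min_eq_left (Nat.le_of_lt hj)]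
      simp only [hM, ej]
    have hMj1 : M (j + 1) = ∏ i, X (gs jf.succ i) := by
      have ej1 : (⟨min (j+1) t, Nat.lt_succ_of_le (min_le_right _ _)⟩ : Fin (t+1)) = jf.succ := by
        ext; simp [jf, Nat.min_eq_left hj]
      simp only [hM, ej1]
    obtain ⟨x, ⟨i0, hi0⟩, ⟨i1, hi1⟩⟩ := hadj jf
    have hsplit0 : M j = X x * ∏ i : Fin nn, X (gs jf.castSucc (i0.succAbove i)) := by
      rw [hMj, Fin.prod_univ_succAbove (fun i => X (gs jf.castSucc i)) i0, hi0]
    have hsplit1 : M (j + 1) = X x * ∏ i : Fin nn, X (gs jf.succ (i1.succAbove i)) := by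
      rw [hMj1, Fin.prod_univ_succAbove (fun i => X (gs jf.succ i)) i1, hi1]
    have hpsieq : psi d K (∏ i : Fin nn, X (gs jf.castSucc (i0.succAbove i)))
        = psi d K (∏ i : Fin nn, X (gs jf.succ (i1.succAbove i))) := by
      have hMeq : psi d K (M j) = psi d K (M (j + 1)) := by
        rw [hMj, hMj1, hψ jf.castSucc, hψ jf.succ]
      rw [hsplit0, hsplit1, map_mul, map_mul] at hMeq
      exact mul_left_cancel₀ (psi_X_ne_zero d K x) hMeq
    have : M j - M (j + 1)
        = X x * ((∏ i : Fin nn, X (gs jf.castSucc (i0.succAbove i)))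
          - ∏ i : Fin nn, X (gs jf.succ (i1.succAbove i))) := by
      rw [hsplit0, hsplit1, mul_sub]
    rw [this]
    refine Ideal.mul_mem_left _ _ (Ideal.subset_span ?_)
    exact ⟨fun i => gs jf.castSucc (i0.succAbove i), fun i => gs jf.succ (i1.succAbove i),
      hpsieq, rfl⟩
end
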